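/- arXiv:0804.3500 — 8 statements merged into one kernel-verified Lean document; each statement's English description precedes it below -/
import Mathlib

section
/- Let (M, φ) be a size pair with reduced size function ℓ*. Then ℓ* is right-continuous in the variable y: for every (x,y) ∈ Δ⁺ there exists ε > 0 such that ℓ*(x, y') = ℓ*(x, y) for all y' with y ≤ y' ≤ y + ε. -/
open Set Topology
open scoped ENNReal

noncomputable def rsf {M : Type*} [TopologicalSpace M] (φ : M → ℝ) (x y : ℝ) : ℕ :=
  Set.ncard {C : Set M | ∃ P, φ P ≤ x ∧ C = connectedComponentIn {Q | φ Q ≤ y} P}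

noncomputable def mult {M : Type*} [TopologicalSpace M] (φ : M → ℝ) (p : ℝ × ℝ) : ℤ :=
  sInf {z : ℤ | ∃ ε : ℝ, 0 < ε ∧ p.1 + ε < p.2 - ε ∧
    z = (rsf φ (p.1 + ε) (p.2 - ε) : ℤ) - (rsf φ (p.1 - ε) (p.2 - ε) : ℤ)
      - (rsf φ (p.1 + ε) (p.2 + ε) : ℤ) + (rsf φ (p.1 - ε) (p.2 + ε) : ℤ)}

noncomputable def multInf {M : Type*} [TopologicalSpace M] (φ : M → ℝ) (k : ℝ) : ℤ :=
  sInf {z : ℤ | ∃ ε : ℝ, 0 < ε ∧ k + ε < 1 / ε ∧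
    z = (rsf φ (k + ε) (1 / ε) : ℤ) - (rsf φ (k - ε) (1 / ε) : ℤ)}

open scoped Classical in
noncomputable def eDist (p q : ℝ × EReal) : ℝ≥0∞ :=
  if p.2 = ⊤ ∧ q.2 = ⊤ then ENNReal.ofReal |p.1 - q.1|
  else if p.2 = ⊤ ∨ q.2 = ⊤ then ⊤
  else ENNReal.ofReal (min (max |p.1 - q.1| |p.2.toReal - q.2.toReal|)
    (max ((p.2.toReal - p.1) / 2) ((q.2.toReal - q.1) / 2)))

def IsRepSeq {M : Type*} [TopologicalSpace M] (φ : M → ℝ) (a : ℕ → ℝ × EReal) : Prop :=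
  (∃ k : ℝ, a 0 = (k, ⊤) ∧ 0 < multInf φ k) ∧
  (∀ i : ℕ, 0 < i →
    (∃ x y : ℝ, a i = (x, (y : EReal)) ∧ x < y ∧ 0 < mult φ (x, y)) ∨
    (∃ x : ℝ, a i = (x, (x : EReal)))) ∧
  (∀ x y : ℝ, x < y → 0 < mult φ (x, y) →
    Set.ncard {i : ℕ | a i = (x, (y : EReal))} = (mult φ (x, y)).toNat) ∧
  {i : ℕ | ∃ x : ℝ, a i = (x, (x : EReal))}.Infinite

noncomputable def dMatchSeq (a b : ℕ → ℝ × EReal) : ℝ≥0∞ :=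
  ⨅ σ : {σ : ℕ → ℕ // Function.Bijective σ}, ⨆ i : ℕ, eDist (a i) (b (σ.1 i))

noncomputable def dMatch {M N : Type*} [TopologicalSpace M] [TopologicalSpace N]
    (φ : M → ℝ) (ψ : N → ℝ) : ℝ≥0∞ :=
  sInf {s : ℝ≥0∞ | ∃ a b, IsRepSeq φ a ∧ IsRepSeq ψ b ∧ s = dMatchSeq a b}

section Aux

open Set

variable {M : Type*} [TopologicalSpace M]

lemma isClosed_connectedComponentIn' {F : Set M} (hF : IsClosed F) (x : M) :
    IsClosed (connectedComponentIn F x) := by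
  by_cases hx : x ∈ F
  · apply isClosed_of_closure_subset
    exact IsPreconnected.subset_connectedComponentIn
      isPreconnected_connectedComponentIn.closure
      (subset_closure (mem_connectedComponentIn hx))
      (hF.closure_subset_iff.mpr (connectedComponentIn_subset F x))
  · rw [connectedComponentIn_eq_empty hx]; exact isClosed_empty

lemma isPreconnected_iInter_seq [CompactSpace M] [T2Space M] {K : ℕ → Set M}
    (hanti : ∀ m n : ℕ, m ≤ n → K n ⊆ K m) (hcl : ∀ n, IsClosed (K n))
    (hpc : ∀ n, IsPreconnected (K n)) (hne : ∀ n, (K n).Nonempty) :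
    IsPreconnected (⋂ n, K n) := by
  have hScl : IsClosed (⋂ n, K n) := isClosed_iInter hcl
  rw [isPreconnected_iff_subset_of_fully_disjoint_closed hScl]
  intro a b ha hb hab hdisj
  obtain ⟨u, v, hu, hv, hau, hbv, huv⟩ := normal_separation ha hb hdisj
  obtain ⟨n, hn⟩ : ∃ n, K n ⊆ u ∪ v := by
    by_contra h
    push_neg at h
    have hne' : (⋂ n, K n \ (u ∪ v)).Nonempty := by
      apply IsCompact.nonempty_iInter_of_directed_nonempty_isCompact_isClosed
      · intro m n
        exact ⟨max m n, fun x hx => ⟨hanti _ _ (le_max_left _ _) hx.1, hx.2⟩,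
          fun x hx => ⟨hanti _ _ (le_max_right _ _) hx.1, hx.2⟩⟩
      · intro n
        obtain ⟨z, hz1, hz2⟩ := Set.not_subset.mp (h n)
        exact ⟨z, hz1, hz2⟩
      · exact fun n => ((hcl n).sdiff (hu.union hv)).isCompact
      · exact fun n => (hcl n).sdiff (hu.union hv)
    obtain ⟨z, hz⟩ := hne'
    have hzS : z ∈ ⋂ n, K n := mem_iInter.2 fun n => (mem_iInter.1 hz n).1
    rcases hab hzS with h1 | h1
    · exact (mem_iInter.1 hz 0).2 (Or.inl (hau h1))
    · exact (mem_iInter.1 hz 0).2 (Or.inr (hbv h1))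
  have hKn : ¬((K n ∩ u).Nonempty ∧ (K n ∩ v).Nonempty) := by
    rintro ⟨h1, h2⟩
    obtain ⟨z, hz⟩ := hpc n u v hu hv hn h1 h2
    exact (huv.ne_of_mem hz.2.1 hz.2.2) rfl
  have hiK : ∀ z ∈ (⋂ m, K m), z ∈ K n := fun z hz => mem_iInter.1 hz n
  rcases not_and_or.mp hKn with h1 | h1
  · -- K n ∩ u empty, so ⋂ ⊆ v, meets no a, so ⊆ b
    right
    intro z hz
    have hzv : z ∈ v := by
      rcases hn (hiK z hz) with h2 | h2
      · exact absurd ⟨z, hiK z hz, h2⟩ h1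
      · exact h2
    rcases hab hz with h2 | h2
    · exact absurd rfl (huv.ne_of_mem (hau h2) hzv)
    · exact h2
  · left
    intro z hz
    have hzu : z ∈ u := by
      rcases hn (hiK z hz) with h2 | h2
      · exact h2
      · exact absurd ⟨z, hiK z hz, h2⟩ h1
    rcases hab hz with h2 | h2
    · exact h2
    · exact absurd rfl (huv.ne_of_mem hzu (hbv h2))

lemma mem_ccIn_of_forall_eps [CompactSpace M] [T2Space M] {φ : M → ℝ} (hφ : Continuous φ)
    {y : ℝ} {P Q : M} (hP : φ P ≤ y)
    (h : ∀ ε : ℝ, 0 < ε → Q ∈ connectedComponentIn {Q' | φ Q' ≤ y + ε} P) :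
    Q ∈ connectedComponentIn {Q' | φ Q' ≤ y} P := by
  set K : ℕ → Set M := fun n => connectedComponentIn {Q' | φ Q' ≤ y + 1 / (n + 1)} P with hK
  have hposn : ∀ n : ℕ, (0 : ℝ) < 1 / (n + 1) := fun n => by positivity
  have hPn : ∀ n : ℕ, P ∈ ({Q' | φ Q' ≤ y + 1 / (n + 1)} : Set M) := fun n =>
    le_trans hP (le_add_of_nonneg_right (hposn n).le)
  have hcl : ∀ t : ℝ, IsClosed {Q' : M | φ Q' ≤ t} := fun t =>
    isClosed_le hφ continuous_const
  have hanti : ∀ m n : ℕ, m ≤ n → K n ⊆ K m := by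
    intro m n hmn
    apply connectedComponentIn_mono
    intro z hz
    have h1 : (1 : ℝ) / (n + 1) ≤ 1 / (m + 1) := by
      apply one_div_le_one_div_of_le (by positivity)
      exact_mod_cast add_le_add_left (Nat.cast_le.mpr hmn) 1
    simp only [Set.mem_setOf_eq] at hz ⊢
    linarith
  have hKpc : IsPreconnected (⋂ n, K n) :=
    isPreconnected_iInter_seq hanti
      (fun n => isClosed_connectedComponentIn' (hcl _) P)
      (fun n => isPreconnected_connectedComponentIn)
      (fun n => ⟨P, mem_connectedComponentIn (hPn n)⟩)
  have hPK : P ∈ ⋂ n, K n := mem_iInter.2 fun n => mem_connectedComponentIn (hPn n)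
  have hsub : (⋂ n, K n) ⊆ {Q' | φ Q' ≤ y} := by
    intro z hz
    by_contra hc
    simp only [Set.mem_setOf_eq, not_le] at hc
    obtain ⟨n, hn⟩ := exists_nat_one_div_lt (K := ℝ) (sub_pos.mpr hc)
    have h2 : z ∈ {Q' : M | φ Q' ≤ y + 1 / (n + 1)} :=
      connectedComponentIn_subset _ P (mem_iInter.1 hz n)
    simp only [Set.mem_setOf_eq] at h2
    linarith
  exact hKpc.subset_connectedComponentIn hPK hsub
    (mem_iInter.2 fun n => h _ (hposn n))

lemma finite_rsf_components [CompactSpace M] [LocallyConnectedSpace M] {φ : M → ℝ}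
    (hφ : Continuous φ) {x y : ℝ} (hxy : x < y) :
    ((fun P => connectedComponentIn {Q | φ Q ≤ y} P) '' {P | φ P ≤ x}).Finite := by
  set A : Set M := {P | φ P ≤ x} with hA
  have hAc : IsCompact A := (isClosed_le hφ continuous_const).isCompact
  have hUopen : ∀ P ∈ A, IsOpen (connectedComponentIn {Q | φ Q < y} P) :=
    fun P _ => (isOpen_lt hφ continuous_const).connectedComponentIn
  have hcover : A ⊆ ⋃ P ∈ A, connectedComponentIn {Q | φ Q < y} P := fun P hP =>
    Set.mem_biUnion hP (mem_connectedComponentIn (lt_of_le_of_lt hP hxy))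
  obtain ⟨s, hsA, hsfin, hscov⟩ := hAc.elim_finite_subcover_image hUopen hcover
  apply Set.Finite.subset (hsfin.image (fun P => connectedComponentIn {Q | φ Q ≤ y} P))
  rintro _ ⟨P, hP, rfl⟩
  obtain ⟨p, hps, hPp⟩ := Set.mem_iUnion₂.mp (hscov hP)
  have hple : φ p ≤ x := hsA hps
  have hsubF : connectedComponentIn {Q : M | φ Q < y} p ⊆ {Q : M | φ Q ≤ y} := by
    apply (connectedComponentIn_subset _ _).trans
    intro z hz
    simp only [Set.mem_setOf_eq] at hz ⊢
    exact le_of_lt hz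
  have hmem : P ∈ connectedComponentIn {Q : M | φ Q ≤ y} p := by
    have hsub2 : connectedComponentIn {Q : M | φ Q < y} p ⊆
        connectedComponentIn {Q : M | φ Q ≤ y} p :=
      isPreconnected_connectedComponentIn.subset_connectedComponentIn
        (mem_connectedComponentIn (show p ∈ {Q : M | φ Q < y} from lt_of_le_of_lt hple hxy))
        hsubF
    exact hsub2 hPp
  exact ⟨p, hps, connectedComponentIn_eq hmem⟩

lemma ncard_image_eq_of_iff {α β : Type*} {f g : α → β} {s : Set α}
    (h : ∀ a ∈ s, ∀ b ∈ s, (f a = f b ↔ g a = g b)) :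
    (f '' s).ncard = (g '' s).ncard := by
  obtain ⟨t, hts, hbij⟩ := Set.exists_subset_bijOn s f
  have h1 : (f '' s).ncard = t.ncard := by
    rw [← hbij.image_eq, Set.ncard_image_of_injOn hbij.injOn]
  have h2 : g '' t = g '' s := by
    apply Set.Subset.antisymm (Set.image_mono hts)
    rintro _ ⟨a, ha, rfl⟩
    obtain ⟨b, hb, hfb⟩ := hbij.image_eq ▸ Set.mem_image_of_mem f ha
    exact ⟨b, hb, (h b (hts hb) a ha).mp hfb⟩
  have h3 : Set.InjOn g t := fun a ha b hb hg =>
    hbij.injOn ha hb ((h a (hts ha) b (hts hb)).mpr hg)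
  rw [← h2, Set.ncard_image_of_injOn h3, h1]

end Aux

theorem rsf_right_continuous_in_y
    {M : Type*} [TopologicalSpace M] [CompactSpace M] [ConnectedSpace M] [LocallyConnectedSpace M] [T2Space M] {φ : M → ℝ} (hφ : Continuous φ)
    (x y : ℝ) (hxy : x < y) :
    ∃ ε > 0, ∀ y' : ℝ, y ≤ y' → y' ≤ y + ε → rsf φ x y' = rsf φ x y := by
  classical
  set A : Set M := {P | φ P ≤ x} with hA
  have himg : ∀ t : ℝ, {C : Set M | ∃ P, φ P ≤ x ∧ C = connectedComponentIn {Q | φ Q ≤ t} P}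
      = (fun P => connectedComponentIn {Q | φ Q ≤ t} P) '' A := by
    intro t; ext C
    simp only [Set.mem_setOf_eq, Set.mem_image, hA]
    exact ⟨fun ⟨P, h1, h2⟩ => ⟨P, h1, h2.symm⟩, fun ⟨P, h1, h2⟩ => ⟨P, h1, h2.symm⟩⟩
  have hfin : ((fun P => connectedComponentIn {Q | φ Q ≤ y} P) '' A).Finite :=
    finite_rsf_components hφ hxy
  obtain ⟨t, hts, hbij⟩ := Set.exists_subset_bijOn A
    (fun P => connectedComponentIn {Q | φ Q ≤ y} P)
  have htfin : t.Finite :=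
    Set.Finite.of_finite_image (by rw [hbij.image_eq]; exact hfin) hbij.injOn
  let tf := htfin.toFinset
  let F : M × M → ℝ := fun pr =>
    if h : ∃ ε : ℝ, 0 < ε ∧ pr.2 ∉ connectedComponentIn {Q | φ Q ≤ y + ε} pr.1
    then h.choose else 1
  have hFpos : ∀ pr, 0 < F pr := by
    intro pr
    simp only [F]
    split
    · next h => exact h.choose_spec.1
    · norm_num
  let fs : Finset ℝ := insert 1 ((tf ×ˢ tf).image F)
  have hfs : fs.Nonempty := ⟨1, Finset.mem_insert_self _ _⟩
  set ε : ℝ := fs.min' hfs with hε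
  have hεpos : 0 < ε := by
    rw [hε, Finset.lt_min'_iff]
    intro b hb
    rcases Finset.mem_insert.mp hb with h1 | h1
    · rw [h1]; norm_num
    · obtain ⟨pr, _, rfl⟩ := Finset.mem_image.mp h1
      exact hFpos pr
  -- the key separation property for representatives
  have hsep : ∀ p ∈ t, ∀ q ∈ t,
      connectedComponentIn {Q : M | φ Q ≤ y} p ≠ connectedComponentIn {Q : M | φ Q ≤ y} q →
      ∀ y' : ℝ, y' ≤ y + ε →
        q ∉ connectedComponentIn {Q : M | φ Q ≤ y'} p := by
    intro p hp q hq hne y' hy'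
    have hcond : ∃ δ : ℝ, 0 < δ ∧ q ∉ connectedComponentIn {Q : M | φ Q ≤ y + δ} p := by
      by_contra hc
      push_neg at hc
      have hq' : q ∈ connectedComponentIn {Q : M | φ Q ≤ y} p :=
        mem_ccIn_of_forall_eps hφ (le_of_lt (lt_of_le_of_lt (hts hp) hxy)) hc
      exact hne (connectedComponentIn_eq hq')
    have hFspec : 0 < F (p, q) ∧ q ∉ connectedComponentIn {Q : M | φ Q ≤ y + F (p, q)} p := by
      simp only [F]
      rw [dif_pos hcond]
      exact hcond.choose_spec
    have hεle : ε ≤ F (p, q) := by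
      apply Finset.min'_le
      apply Finset.mem_insert_of_mem
      exact Finset.mem_image.mpr ⟨(p, q),
        Finset.mem_product.mpr ⟨htfin.mem_toFinset.mpr hp, htfin.mem_toFinset.mpr hq⟩, rfl⟩
    intro hmem
    apply hFspec.2
    have hss : ({Q : M | φ Q ≤ y'} : Set M) ⊆ {Q : M | φ Q ≤ y + F (p, q)} := by
      intro z hz
      simp only [Set.mem_setOf_eq] at hz ⊢
      linarith
    exact connectedComponentIn_mono p hss hmem
  refine ⟨ε, hεpos, ?_⟩
  intro y' hy1 hy2
  have hxy' : x < y' := lt_of_lt_of_le hxy hy1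
  -- monotone direction: equal at y implies equal at y'
  have hmono : ∀ a ∈ A, ∀ b ∈ A,
      connectedComponentIn {Q : M | φ Q ≤ y} a = connectedComponentIn {Q : M | φ Q ≤ y} b →
      connectedComponentIn {Q : M | φ Q ≤ y'} a = connectedComponentIn {Q : M | φ Q ≤ y'} b := by
    intro a ha b hb hab
    have hbmem : b ∈ connectedComponentIn {Q : M | φ Q ≤ y} a := by
      rw [hab]
      exact mem_connectedComponentIn (le_of_lt (lt_of_le_of_lt hb hxy))
    have hss : ({Q : M | φ Q ≤ y} : Set M) ⊆ {Q : M | φ Q ≤ y'} := by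
      intro z hz
      simp only [Set.mem_setOf_eq] at hz ⊢
      linarith
    have : b ∈ connectedComponentIn {Q : M | φ Q ≤ y'} a :=
      connectedComponentIn_mono a hss hbmem
    exact connectedComponentIn_eq this
  have hiff : ∀ a ∈ A, ∀ b ∈ A,
      (connectedComponentIn {Q : M | φ Q ≤ y'} a = connectedComponentIn {Q : M | φ Q ≤ y'} b ↔
       connectedComponentIn {Q : M | φ Q ≤ y} a = connectedComponentIn {Q : M | φ Q ≤ y} b) := by
    intro a ha b hb
    constructor
    · intro h'
      by_contra hne
      obtain ⟨p, hp, hpa⟩ : ∃ p ∈ t,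
          connectedComponentIn {Q : M | φ Q ≤ y} p = connectedComponentIn {Q : M | φ Q ≤ y} a := by
        have : connectedComponentIn {Q : M | φ Q ≤ y} a ∈
            (fun P => connectedComponentIn {Q | φ Q ≤ y} P) '' A := Set.mem_image_of_mem _ ha
        rw [← hbij.image_eq] at this
        obtain ⟨p, hp, hpeq⟩ := this
        exact ⟨p, hp, hpeq⟩
      obtain ⟨q, hq, hqb⟩ : ∃ q ∈ t,
          connectedComponentIn {Q : M | φ Q ≤ y} q = connectedComponentIn {Q : M | φ Q ≤ y} b := by
        have : connectedComponentIn {Q : M | φ Q ≤ y} b ∈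
            (fun P => connectedComponentIn {Q | φ Q ≤ y} P) '' A := Set.mem_image_of_mem _ hb
        rw [← hbij.image_eq] at this
        obtain ⟨q, hq, hqeq⟩ := this
        exact ⟨q, hq, hqeq⟩
      have hpq : connectedComponentIn {Q : M | φ Q ≤ y} p ≠
          connectedComponentIn {Q : M | φ Q ≤ y} q := by
        rw [hpa, hqb]; exact hne
      have h1 : connectedComponentIn {Q : M | φ Q ≤ y'} p =
          connectedComponentIn {Q : M | φ Q ≤ y'} a := hmono p (hts hp) a ha hpa
      have h2 : connectedComponentIn {Q : M | φ Q ≤ y'} q =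
          connectedComponentIn {Q : M | φ Q ≤ y'} b := hmono q (hts hq) b hb hqb
      have hqmem : q ∈ connectedComponentIn {Q : M | φ Q ≤ y'} p := by
        rw [h1, h', ← h2]
        exact mem_connectedComponentIn (le_of_lt (lt_of_le_of_lt (hts hq) hxy'))
      exact hsep p hp q hq hpq y' hy2 hqmem
    · exact hmono a ha b hb
  rw [rsf, rsf, himg y, himg y']
  exact ncard_image_eq_of_iff hiff
end

section
/- Let (M, φ) be a size pair with reduced size function ℓ*. Then ℓ* is right-continuous in the variable x: for every (x,y) ∈ Δ⁺ there exists ε > 0 with x + ε < y such that ℓ*(x', y) = ℓ*(x, y) for all x' with x ≤ x' ≤ x + ε. -/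
open Set Topology
open scoped ENNReal

private lemma rsf_aux {M : Type*} [TopologicalSpace M] [CompactSpace M] [LocallyConnectedSpace M] [T2Space M]
    {φ : M → ℝ} (hφ : Continuous φ) (x y : ℝ) (hxy : x < y) :
    ∃ ε > 0, x + ε < y ∧ ∀ x' : ℝ, x ≤ x' → x' ≤ x + ε →
      {C : Set M | ∃ P, φ P ≤ x' ∧ C = connectedComponentIn {Q | φ Q ≤ y} P}
        = {C : Set M | ∃ P, φ P ≤ x ∧ C = connectedComponentIn {Q | φ Q ≤ y} P} := by
  classical
  set K : Set M := {Q | φ Q ≤ y} with hK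
  -- choose open connected neighborhoods
  have hV : ∀ P : M, φ P ≤ x → ∃ V : Set M, IsOpen V ∧ P ∈ V ∧ IsConnected V ∧ V ⊆ K := by
    intro P hP
    have hmem : {Q : M | φ Q < y} ∈ 𝓝 P :=
      (isOpen_lt hφ continuous_const).mem_nhds (lt_of_le_of_lt hP hxy)
    obtain ⟨V, hVU, hVo, hPV, hVc⟩ :=
      (locallyConnectedSpace_iff_subsets_isOpen_isConnected.mp ‹_›) P _ hmem
    exact ⟨V, hVo, hPV, hVc, fun Q hQ => show φ Q ≤ y from le_of_lt (hVU hQ)⟩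
  let V : ∀ P : M, φ P ≤ x → Set M := fun P hP => (hV P hP).choose
  let U : Set M := ⋃ (P : M) (hP : φ P ≤ x), V P hP
  have hUopen : IsOpen U := isOpen_iUnion fun P => isOpen_iUnion fun hP => (hV P hP).choose_spec.1
  have hsubU : {Q : M | φ Q ≤ x} ⊆ U := fun P hP =>
    mem_iUnion.mpr ⟨P, mem_iUnion.mpr ⟨hP, (hV P hP).choose_spec.2.1⟩⟩
  -- find ε
  have hUc : IsCompact Uᶜ := hUopen.isClosed_compl.isCompact
  obtain ⟨ε, hε, hεy, hεU⟩ :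
      ∃ ε > 0, x + ε < y ∧ ∀ Q : M, φ Q ≤ x + ε → Q ∈ U := by
    rcases eq_empty_or_nonempty (Uᶜ) with h | h
    · refine ⟨(y - x)/2, by linarith, by linarith, fun Q _ => ?_⟩
      by_contra hQ
      exact absurd (mem_compl hQ) (by simp [h])
    · obtain ⟨P₀, hP₀, hmin⟩ := hUc.exists_isMinOn h hφ.continuousOn
      have hxP₀ : x < φ P₀ := by
        by_contra h'
        exact hP₀ (hsubU (le_of_not_gt h'))
      refine ⟨min ((φ P₀ - x)/2) ((y - x)/2), lt_min (by linarith) (by linarith), by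
        have := min_le_right ((φ P₀ - x)/2) ((y - x)/2); linarith, fun Q hQ => ?_⟩
      by_contra hQU
      have h2 : φ P₀ ≤ φ Q := hmin (mem_compl hQU)
      have h3 := min_le_left ((φ P₀ - x)/2) ((y - x)/2)
      linarith
  refine ⟨ε, hε, hεy, fun x' hx hx' => ?_⟩
  ext C
  constructor
  · rintro ⟨P, hP, rfl⟩
    have hPU : P ∈ U := hεU P (le_trans hP hx')
    obtain ⟨P₀, hP₀, hPV⟩ : ∃ P₀ : M, ∃ hP₀ : φ P₀ ≤ x, P ∈ V P₀ hP₀ := by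
      simpa only [U, mem_iUnion] using hPU
    obtain ⟨hVo, hP₀V, hVc, hVK⟩ := (hV P₀ hP₀).choose_spec
    have hsub : V P₀ hP₀ ⊆ connectedComponentIn K P₀ :=
      hVc.isPreconnected.subset_connectedComponentIn hP₀V hVK
    refine ⟨P₀, hP₀, ?_⟩
    exact (connectedComponentIn_eq (hsub hPV)).symm
  · rintro ⟨P, hP, rfl⟩
    exact ⟨P, le_trans hP hx, rfl⟩


theorem rsf_right_continuous_in_x
    {M : Type*} [TopologicalSpace M] [CompactSpace M] [ConnectedSpace M] [LocallyConnectedSpace M] [T2Space M] {φ : M → ℝ} (hφ : Continuous φ)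
    (x y : ℝ) (hxy : x < y) :
    ∃ ε > 0, x + ε < y ∧ ∀ x' : ℝ, x ≤ x' → x' ≤ x + ε → rsf φ x' y = rsf φ x y := by
  obtain ⟨ε, hε, hεy, h⟩ := rsf_aux hφ x y hxy
  exact ⟨ε, hε, hεy, fun x' hx hx' => congrArg Set.ncard (h x' hx hx')⟩
end

section
/- Let (M, φ) be a size pair with reduced size function ℓ*. For all real numbers x₁ ≤ x₂ < y₁ ≤ y₂, the quantity ℓ*(x₂,y₁) − ℓ*(x₁,y₁) − ℓ*(x₂,y₂) + ℓ*(x₁,y₂) is non-negative. In particular, the multiplicity μ(p) of every point p ∈ Δ⁺ is non-negative. -/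
open Set Topology
open scoped ENNReal

lemma rsfSet_finite {M : Type*} [TopologicalSpace M] [CompactSpace M] [LocallyConnectedSpace M]
    {φ : M → ℝ} (hφ : Continuous φ) {x y : ℝ} (hxy : x < y) :
    {C : Set M | ∃ P, φ P ≤ x ∧ C = connectedComponentIn {Q | φ Q ≤ y} P}.Finite := by
  classical
  set K : Set M := {P | φ P ≤ x} with hK
  have hKcl : IsClosed K := isClosed_le hφ continuous_const
  have hKcpt : IsCompact K := hKcl.isCompact
  have hopen : IsOpen {Q : M | φ Q < y} := isOpen_lt hφ continuous_const
  have hcover : K ⊆ ⋃ P ∈ K, connectedComponentIn {Q : M | φ Q < y} P := by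
    intro P hP
    exact mem_biUnion hP (mem_connectedComponentIn (lt_of_le_of_lt hP hxy))
  obtain ⟨t, htK, htfin, htcover⟩ := hKcpt.elim_finite_subcover_image
    (fun P _ => hopen.connectedComponentIn) hcover
  apply (htfin.image (fun P => connectedComponentIn {Q : M | φ Q ≤ y} P)).subset
  rintro C ⟨Q, hQ, rfl⟩
  obtain ⟨P₀, hP₀t, hQmem⟩ := by
    have := htcover hQ
    simpa using this
  have hP₀lt : φ P₀ < y := lt_of_le_of_lt (htK hP₀t) hxy
  have hsub : connectedComponentIn {Q : M | φ Q < y} P₀ ⊆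
      connectedComponentIn {Q : M | φ Q ≤ y} Q :=
    isPreconnected_connectedComponentIn.subset_connectedComponentIn hQmem
      ((connectedComponentIn_subset _ _).trans (fun a ha => show φ a ≤ y from le_of_lt ha))
  have hP₀in : P₀ ∈ connectedComponentIn {Q : M | φ Q ≤ y} Q :=
    hsub (mem_connectedComponentIn hP₀lt)
  exact ⟨P₀, hP₀t, (connectedComponentIn_eq hP₀in).symm⟩

lemma quad_ncard {M : Type*} [TopologicalSpace M] [CompactSpace M] [LocallyConnectedSpace M]
    {φ : M → ℝ} (hφ : Continuous φ) {x₁ x₂ y₁ y₂ : ℝ}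
    (hx : x₁ ≤ x₂) (h : x₂ < y₁) (hy : y₁ ≤ y₂) :
    0 ≤ (rsf φ x₂ y₁ : ℤ) - (rsf φ x₁ y₁ : ℤ) - (rsf φ x₂ y₂ : ℤ) + (rsf φ x₁ y₂ : ℤ) := by
  classical
  set F₁ : Set M := {Q | φ Q ≤ y₁} with hF₁
  set F₂ : Set M := {Q | φ Q ≤ y₂} with hF₂
  have hF₁₂ : F₁ ⊆ F₂ := fun a ha => le_trans ha hy
  set A₁ : Set (Set M) := {C | ∃ P, φ P ≤ x₁ ∧ C = connectedComponentIn F₁ P} with hA₁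
  set A₂ : Set (Set M) := {C | ∃ P, φ P ≤ x₂ ∧ C = connectedComponentIn F₁ P} with hA₂
  set B₁ : Set (Set M) := {C | ∃ P, φ P ≤ x₁ ∧ C = connectedComponentIn F₂ P} with hB₁
  set B₂ : Set (Set M) := {C | ∃ P, φ P ≤ x₂ ∧ C = connectedComponentIn F₂ P} with hB₂
  have hx₁y₁ : x₁ < y₁ := lt_of_le_of_lt hx h
  have hA₁fin : A₁.Finite := rsfSet_finite hφ hx₁y₁
  have hA₂fin : A₂.Finite := rsfSet_finite hφ h
  have hB₁fin : B₁.Finite := rsfSet_finite hφ (lt_of_lt_of_le hx₁y₁ hy)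
  have hB₂fin : B₂.Finite := rsfSet_finite hφ (lt_of_lt_of_le h hy)
  have hA : A₁ ⊆ A₂ := fun C ⟨P, hP, hC⟩ => ⟨P, hP.trans hx, hC⟩
  have hB : B₁ ⊆ B₂ := fun C ⟨P, hP, hC⟩ => ⟨P, hP.trans hx, hC⟩
  -- the injection
  set f : Set M → Set M := fun D =>
    if hD : ∃ P, φ P ≤ x₂ ∧ D = connectedComponentIn F₂ P
    then connectedComponentIn F₁ hD.choose else ∅ with hf
  have key : (B₂ \ B₁).ncard ≤ (A₂ \ A₁).ncard := by
    apply Set.ncard_le_ncard_of_injOn f _ _ (hA₂fin.diff : (A₂ \ A₁).Finite)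
    · rintro D ⟨hD₂, hD₁⟩
      have hD : ∃ P, φ P ≤ x₂ ∧ D = connectedComponentIn F₂ P := hD₂
      obtain ⟨hP, hDP⟩ := hD.choose_spec
      set P := hD.choose
      have hfD : f D = connectedComponentIn F₁ P := by simp only [hf]; exact dif_pos hD
      constructor
      · exact hfD ▸ ⟨P, hP, rfl⟩
      · rintro ⟨Q, hQ, hEq⟩
        rw [hfD] at hEq
        have hQmem : Q ∈ connectedComponentIn F₁ P := by
          rw [hEq]
          exact mem_connectedComponentIn (le_trans hQ (le_of_lt hx₁y₁))
        have hQmem₂ : Q ∈ connectedComponentIn F₂ P :=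
          connectedComponentIn_mono P hF₁₂ hQmem
        exact hD₁ ⟨Q, hQ, hDP.trans (connectedComponentIn_eq hQmem₂)⟩
    · rintro D ⟨hD₂, -⟩ D' ⟨hD'₂, -⟩ hDD'
      have hD : ∃ P, φ P ≤ x₂ ∧ D = connectedComponentIn F₂ P := hD₂
      have hD' : ∃ P, φ P ≤ x₂ ∧ D' = connectedComponentIn F₂ P := hD'₂
      obtain ⟨hP, hDP⟩ := hD.choose_spec
      obtain ⟨hP', hDP'⟩ := hD'.choose_spec
      simp only [hf, dif_pos hD, dif_pos hD'] at hDD'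
      have hP'mem : hD'.choose ∈ connectedComponentIn F₁ hD.choose := by
        rw [hDD']
        exact mem_connectedComponentIn (le_trans hP' (le_of_lt h))
      have : hD'.choose ∈ connectedComponentIn F₂ hD.choose :=
        connectedComponentIn_mono _ hF₁₂ hP'mem
      rw [hDP, hDP', connectedComponentIn_eq this]
  have eA : (A₂ \ A₁).ncard + A₁.ncard = A₂.ncard :=
    Set.ncard_diff_add_ncard_of_subset hA hA₂fin
  have eB : (B₂ \ B₁).ncard + B₁.ncard = B₂.ncard :=
    Set.ncard_diff_add_ncard_of_subset hB hB₂fin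
  have h1 : rsf φ x₂ y₁ = A₂.ncard := rfl
  have h2 : rsf φ x₁ y₁ = A₁.ncard := rfl
  have h3 : rsf φ x₂ y₂ = B₂.ncard := rfl
  have h4 : rsf φ x₁ y₂ = B₁.ncard := rfl
  rw [h1, h2, h3, h4]
  omega

theorem multiplicity_nonneg
    {M : Type*} [TopologicalSpace M] [CompactSpace M] [ConnectedSpace M] [LocallyConnectedSpace M] [T2Space M] {φ : M → ℝ} (hφ : Continuous φ) :
    (∀ x₁ x₂ y₁ y₂ : ℝ, x₁ ≤ x₂ → x₂ < y₁ → y₁ ≤ y₂ →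
      0 ≤ (rsf φ x₂ y₁ : ℤ) - (rsf φ x₁ y₁ : ℤ) - (rsf φ x₂ y₂ : ℤ) + (rsf φ x₁ y₂ : ℤ)) ∧
    (∀ x y : ℝ, x < y → 0 ≤ mult φ (x, y)) := by
  constructor
  · exact fun x₁ x₂ y₁ y₂ hx h hy => quad_ncard hφ hx h hy
  · intro x y hxy
    have hεpos : 0 < (y - x) / 4 := by linarith
    apply le_csInf
    · exact ⟨_, (y - x) / 4, hεpos, by norm_num; linarith, rfl⟩
    · rintro z ⟨ε, hε, hlt, rfl⟩
      have h1 : x - ε ≤ x + ε := by linarith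
      have h3 : y - ε ≤ y + ε := by linarith
      have := quad_ncard hφ h1 (by simpa using hlt) h3
      linarith
end

section
/- Let (M, φ) and (N, ψ) be size pairs and let f : M → N be a homeomorphism with max_{P∈M} |φ(P) − ψ(f(P))| ≤ h. Then for every (x,y) ∈ Δ⁺ with x − h < y + h, the inequality ℓ*_{(M,φ)}(x − h, y + h) ≤ ℓ*_{(N,ψ)}(x, y) holds. -/
open Set Topology
open scoped ENNReal

lemma rsf_set_finite {N : Type*} [TopologicalSpace N] [CompactSpace N]
    [LocallyConnectedSpace N] {ψ : N → ℝ} (hψ : Continuous ψ) {x y : ℝ} (hxy : x < y) :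
    {C : Set N | ∃ P, ψ P ≤ x ∧ C = connectedComponentIn {Q | ψ Q ≤ y} P}.Finite := by
  set U : Set N := {Q | ψ Q < y} with hUdef
  have hU : IsOpen U := isOpen_lt hψ continuous_const
  set K : Set N := {Q | ψ Q ≤ x} with hKdef
  have hK : IsCompact K := (isClosed_le hψ continuous_const).isCompact
  have hcov : K ⊆ ⋃ P ∈ K, connectedComponentIn U P := fun P hP =>
    Set.mem_biUnion hP (mem_connectedComponentIn (lt_of_le_of_lt hP hxy))
  obtain ⟨T, hTK, hTfin, hTcov⟩ :=
    hK.elim_finite_subcover_image (fun P _ => hU.connectedComponentIn) hcov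
  apply (hTfin.image (fun P => connectedComponentIn {Q | ψ Q ≤ y} P)).subset
  rintro C ⟨P, hPx, rfl⟩
  obtain ⟨Q, hQT, hPQ⟩ := Set.mem_iUnion₂.mp (hTcov hPx)
  have hQU : Q ∈ U := lt_of_le_of_lt (hTK hQT) hxy
  have hUsub : U ⊆ {Q | ψ Q ≤ y} := fun q hq => le_of_lt (show ψ q < y from hq)
  have hconn : IsConnected (connectedComponentIn U Q) :=
    isConnected_connectedComponentIn_iff.mpr hQU
  have hsub : connectedComponentIn U Q ⊆ connectedComponentIn {Q | ψ Q ≤ y} P :=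
    hconn.isPreconnected.subset_connectedComponentIn hPQ
      ((connectedComponentIn_subset U Q).trans hUsub)
  exact ⟨Q, hQT, (connectedComponentIn_eq (hsub (mem_connectedComponentIn hQU))).symm⟩

theorem rsf_homeo_inequality
    {M N : Type*} [TopologicalSpace M] [CompactSpace M] [ConnectedSpace M] [LocallyConnectedSpace M] [T2Space M] [TopologicalSpace N] [CompactSpace N] [ConnectedSpace N] [LocallyConnectedSpace N] [T2Space N]
    {φ : M → ℝ} {ψ : N → ℝ} (hφ : Continuous φ) (hψ : Continuous ψ)
    (f : M ≃ₜ N) (h : ℝ) (hb : ∀ P : M, |φ P - ψ (f P)| ≤ h)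
    (x y : ℝ) (hxy : x < y) (hxy' : x - h < y + h) :
    rsf φ (x - h) (y + h) ≤ rsf ψ x y := by
  classical
  have hb1 : ∀ P : M, φ P ≤ ψ (f P) + h := fun P => by
    have := abs_le.mp (hb P); linarith [this.2]
  have hb2 : ∀ P : M, ψ (f P) ≤ φ P + h := fun P => by
    have := abs_le.mp (hb P); linarith [this.1]
  have hfin : {C : Set N | ∃ P, ψ P ≤ x ∧ C = connectedComponentIn {Q | ψ Q ≤ y} P}.Finite :=
    rsf_set_finite hψ hxy
  set F : Set M → Set N := fun C =>
    if hC : ∃ P, φ P ≤ x - h ∧ C = connectedComponentIn {Q | φ Q ≤ y + h} P then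
      connectedComponentIn {Q | ψ Q ≤ y} (f hC.choose)
    else ∅ with hF
  have hmaps : ∀ C ∈ {C : Set M | ∃ P, φ P ≤ x - h ∧
      C = connectedComponentIn {Q | φ Q ≤ y + h} P},
      F C ∈ {C : Set N | ∃ P, ψ P ≤ x ∧ C = connectedComponentIn {Q | ψ Q ≤ y} P} := by
    intro C hC
    have hCe : ∃ P, φ P ≤ x - h ∧ C = connectedComponentIn {Q | φ Q ≤ y + h} P := hC
    rw [hF]
    simp only [dif_pos hCe]
    exact ⟨f hCe.choose, by linarith [hb2 hCe.choose, hCe.choose_spec.1], rfl⟩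
  have hinj : Set.InjOn F {C : Set M | ∃ P, φ P ≤ x - h ∧
      C = connectedComponentIn {Q | φ Q ≤ y + h} P} := by
    intro C hC C' hC' hFF
    have hCe : ∃ P, φ P ≤ x - h ∧ C = connectedComponentIn {Q | φ Q ≤ y + h} P := hC
    have hC'e : ∃ P, φ P ≤ x - h ∧ C' = connectedComponentIn {Q | φ Q ≤ y + h} P := hC'
    rw [hF] at hFF
    simp only [dif_pos hCe, dif_pos hC'e] at hFF
    obtain ⟨hPx, hCeq⟩ := hCe.choose_spec
    obtain ⟨hPx', hCeq'⟩ := hC'e.choose_spec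
    set P := hCe.choose with hPdef
    set P' := hC'e.choose with hP'def
    have hfP : f P ∈ {Q : N | ψ Q ≤ y} :=
      le_of_lt (lt_of_le_of_lt (by linarith [hb2 P] : ψ (f P) ≤ x) hxy)
    have hfP' : f P' ∈ {Q : N | ψ Q ≤ y} :=
      le_of_lt (lt_of_le_of_lt (by linarith [hb2 P'] : ψ (f P') ≤ x) hxy)
    have hfP'D : f P' ∈ connectedComponentIn {Q : N | ψ Q ≤ y} (f P) := by
      rw [hFF]; exact mem_connectedComponentIn hfP'
    have hDconn : IsConnected (connectedComponentIn {Q : N | ψ Q ≤ y} (f P)) :=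
      isConnected_connectedComponentIn_iff.mpr hfP
    have hpre : IsConnected (f.symm '' connectedComponentIn {Q : N | ψ Q ≤ y} (f P)) :=
      hDconn.image _ f.symm.continuous.continuousOn
    have hpresub : f.symm '' connectedComponentIn {Q : N | ψ Q ≤ y} (f P) ⊆
        {Q : M | φ Q ≤ y + h} := by
      rintro _ ⟨Q, hQ, rfl⟩
      have hQy : ψ Q ≤ y := connectedComponentIn_subset {Q : N | ψ Q ≤ y} (f P) hQ
      have h1 := hb1 (f.symm Q)
      simp only [Homeomorph.apply_symm_apply] at h1
      show φ (f.symm Q) ≤ y + h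
      linarith
    have hPmem : P ∈ f.symm '' connectedComponentIn {Q : N | ψ Q ≤ y} (f P) :=
      ⟨f P, mem_connectedComponentIn hfP, f.symm_apply_apply P⟩
    have hP'mem : P' ∈ f.symm '' connectedComponentIn {Q : N | ψ Q ≤ y} (f P) :=
      ⟨f P', hfP'D, f.symm_apply_apply P'⟩
    have hsub : f.symm '' connectedComponentIn {Q : N | ψ Q ≤ y} (f P) ⊆
        connectedComponentIn {Q : M | φ Q ≤ y + h} P :=
      hpre.isPreconnected.subset_connectedComponentIn hPmem hpresub
    rw [hCeq, hCeq']
    exact connectedComponentIn_eq (hsub hP'mem)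
  exact Set.ncard_le_ncard_of_injOn F hmaps hinj hfin
end

section
/- Let (M, φ) be a size pair. Every proper cornerpoint p̄ = (x̄, ȳ) of the reduced size function ℓ*_{(M,φ)} satisfies min φ ≤ x̄ < ȳ ≤ max φ. Moreover, the abscissa of the cornerpoint at infinity equals min φ. -/
open Set Topology
open scoped ENNReal

lemma int_sInf_nonpos {S : Set ℤ} (h : (0:ℤ) ∈ S) : sInf S ≤ 0 := by
  by_cases hb : BddBelow S
  · exact csInf_le hb h
  · rw [Int.csInf_of_not_bddBelow hb]

lemma rsf_eq_zero {M : Type*} [TopologicalSpace M] {φ : M → ℝ} {a b : ℝ}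
    (h : ∀ P : M, ¬ φ P ≤ a) : rsf φ a b = 0 := by
  have he : {C : Set M | ∃ P, φ P ≤ a ∧ C = connectedComponentIn {Q | φ Q ≤ b} P} = ∅ := by
    ext C
    simp only [Set.mem_setOf_eq, Set.mem_empty_iff_false, iff_false]
    rintro ⟨P, hP, -⟩
    exact h P hP
  rw [rsf, he, Set.ncard_empty]

open scoped Classical in
lemma rsf_eq_of_top {M : Type*} [TopologicalSpace M] [PreconnectedSpace M] {φ : M → ℝ} {a b : ℝ}
    (h : ∀ P : M, φ P ≤ b) :
    rsf φ a b = if ∃ P : M, φ P ≤ a then 1 else 0 := by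
  have huniv : {Q : M | φ Q ≤ b} = Set.univ := Set.eq_univ_of_forall h
  have hc : ∀ P : M, connectedComponentIn {Q : M | φ Q ≤ b} P = Set.univ := fun P => by
    rw [huniv, connectedComponentIn_univ, PreconnectedSpace.connectedComponent_eq_univ]
  split_ifs with hex
  · have hs : {C : Set M | ∃ P, φ P ≤ a ∧ C = connectedComponentIn {Q | φ Q ≤ b} P}
        = {Set.univ} := by
      ext C
      simp only [Set.mem_setOf_eq, Set.mem_singleton_iff]
      constructor
      · rintro ⟨P, -, rfl⟩; exact hc P
      · rintro rfl
        obtain ⟨P, hP⟩ := hex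
        exact ⟨P, hP, (hc P).symm⟩
    rw [rsf, hs, Set.ncard_singleton]
  · push_neg at hex
    exact rsf_eq_zero fun P hP => absurd hP (not_le.mpr (hex P))

lemma inv_bound {c ε : ℝ} (hc : 0 < c) (hε : 0 < ε) (h : ε ≤ 1 / c) : c ≤ 1 / ε := by
  rw [le_div_iff₀ hε]
  rw [le_div_iff₀ hc] at h
  linarith [mul_comm c ε]

theorem localization_of_cornerpoints
    {M : Type*} [TopologicalSpace M] [CompactSpace M] [ConnectedSpace M] [LocallyConnectedSpace M] [T2Space M] {φ : M → ℝ} (hφ : Continuous φ) :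
    (∀ xb yb : ℝ, xb < yb → 0 < mult φ (xb, yb) →
      (⨅ P : M, φ P) ≤ xb ∧ yb ≤ ⨆ P : M, φ P) ∧
    (∀ k : ℝ, 0 < multInf φ k → k = ⨅ P : M, φ P) := by
  obtain ⟨P0, -, hP0⟩ := isCompact_univ.exists_isMinOn Set.univ_nonempty hφ.continuousOn
  obtain ⟨P1, -, hP1⟩ := isCompact_univ.exists_isMaxOn Set.univ_nonempty hφ.continuousOn
  simp only [isMinOn_iff, isMaxOn_iff, Set.mem_univ, forall_true_left, true_implies] at hP0 hP1
  set m : ℝ := ⨅ P : M, φ P with hm_def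
  set s : ℝ := ⨆ P : M, φ P with hs_def
  have hbb : BddBelow (Set.range φ) := ⟨φ P0, by rintro _ ⟨P, rfl⟩; exact hP0 P⟩
  have hba : BddAbove (Set.range φ) := ⟨φ P1, by rintro _ ⟨P, rfl⟩; exact hP1 P⟩
  have hm : ∀ P : M, m ≤ φ P := fun P => ciInf_le hbb P
  have hs : ∀ P : M, φ P ≤ s := fun P => le_ciSup hba P
  have hP0m : φ P0 ≤ m := le_ciInf hP0
  constructor
  · intro xb yb hxy hpos
    rw [mult] at hpos
    constructor
    · by_contra hlt
      push_neg at hlt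
      set ε : ℝ := min ((m - xb) / 2) ((yb - xb) / 3) with hε_def
      have hε : 0 < ε := lt_min (by linarith) (by linarith)
      have hε1 : ε ≤ (m - xb) / 2 := min_le_left _ _
      have hε2 : ε ≤ (yb - xb) / 3 := min_le_right _ _
      have hz' : ∀ b : ℝ, rsf φ (xb + ε) b = 0 := fun b =>
        rsf_eq_zero (fun P hP => by have := hm P; linarith)
      have hz'' : ∀ b : ℝ, rsf φ (xb - ε) b = 0 := fun b =>
        rsf_eq_zero (fun P hP => by have := hm P; linarith)
      have h0 : (0 : ℤ) ∈ {z : ℤ | ∃ ε' : ℝ, 0 < ε' ∧ (xb, yb).1 + ε' < (xb, yb).2 - ε' ∧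
          z = (rsf φ ((xb, yb).1 + ε') ((xb, yb).2 - ε') : ℤ)
            - (rsf φ ((xb, yb).1 - ε') ((xb, yb).2 - ε') : ℤ)
            - (rsf φ ((xb, yb).1 + ε') ((xb, yb).2 + ε') : ℤ)
            + (rsf φ ((xb, yb).1 - ε') ((xb, yb).2 + ε') : ℤ)} :=
        ⟨ε, hε, by simp only; linarith, by simp only [hz', hz'']; ring⟩
      exact absurd (int_sInf_nonpos h0) (not_le.mpr hpos)
    · by_contra hlt
      push_neg at hlt
      set ε : ℝ := min ((yb - s) / 2) ((yb - xb) / 3) with hε_def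
      have hε : 0 < ε := lt_min (by linarith) (by linarith)
      have hε1 : ε ≤ (yb - s) / 2 := min_le_left _ _
      have hε2 : ε ≤ (yb - xb) / 3 := min_le_right _ _
      have ht1 : ∀ P : M, φ P ≤ yb - ε := fun P => by have := hs P; linarith
      have ht2 : ∀ P : M, φ P ≤ yb + ε := fun P => by have := hs P; linarith
      have h0 : (0 : ℤ) ∈ {z : ℤ | ∃ ε' : ℝ, 0 < ε' ∧ (xb, yb).1 + ε' < (xb, yb).2 - ε' ∧
          z = (rsf φ ((xb, yb).1 + ε') ((xb, yb).2 - ε') : ℤ)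
            - (rsf φ ((xb, yb).1 - ε') ((xb, yb).2 - ε') : ℤ)
            - (rsf φ ((xb, yb).1 + ε') ((xb, yb).2 + ε') : ℤ)
            + (rsf φ ((xb, yb).1 - ε') ((xb, yb).2 + ε') : ℤ)} := by
        refine ⟨ε, hε, by simp only; linarith, ?_⟩
        simp only [rsf_eq_of_top ht1, rsf_eq_of_top ht2]
        ring
      exact absurd (int_sInf_nonpos h0) (not_le.mpr hpos)
  · intro k hpos
    rw [multInf] at hpos
    by_contra hne
    rcases lt_or_gt_of_ne hne with hlt | hgt
    · -- k < m
      set ε : ℝ := min ((m - k) / 2) (1 / (|k| + 2)) with hε_def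
      have hc : (0:ℝ) < |k| + 2 := by positivity
      have hε : 0 < ε := lt_min (by linarith) (by positivity)
      have hε1 : ε ≤ (m - k) / 2 := min_le_left _ _
      have hε2 : ε ≤ 1 / (|k| + 2) := min_le_right _ _
      have hinv : |k| + 2 ≤ 1 / ε := inv_bound hc hε hε2
      have hεle1 : ε ≤ 1 := hε2.trans (by
        rw [div_le_one hc]; have := abs_nonneg k; linarith)
      have hk : k + ε < 1 / ε := by
        have := le_abs_self k
        linarith
      have hz1 : rsf φ (k + ε) (1 / ε) = 0 :=
        rsf_eq_zero (fun P hP => by have := hm P; linarith)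
      have hz2 : rsf φ (k - ε) (1 / ε) = 0 :=
        rsf_eq_zero (fun P hP => by have := hm P; linarith)
      have h0 : (0 : ℤ) ∈ {z : ℤ | ∃ ε' : ℝ, 0 < ε' ∧ k + ε' < 1 / ε' ∧
          z = (rsf φ (k + ε') (1 / ε') : ℤ) - (rsf φ (k - ε') (1 / ε') : ℤ)} :=
        ⟨ε, hε, hk, by rw [hz1, hz2]; ring⟩
      exact absurd (int_sInf_nonpos h0) (not_le.mpr hpos)
    · -- m < k
      set ε : ℝ := min ((k - m) / 2) (1 / (|k| + |s| + 2)) with hε_def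
      have hc : (0:ℝ) < |k| + |s| + 2 := by positivity
      have hε : 0 < ε := lt_min (by linarith) (by positivity)
      have hε1 : ε ≤ (k - m) / 2 := min_le_left _ _
      have hε2 : ε ≤ 1 / (|k| + |s| + 2) := min_le_right _ _
      have hinv : |k| + |s| + 2 ≤ 1 / ε := inv_bound hc hε hε2
      have hεle1 : ε ≤ 1 := hε2.trans (by
        rw [div_le_one hc]; have := abs_nonneg k; have := abs_nonneg s; linarith)
      have hk : k + ε < 1 / ε := by
        have := le_abs_self k; have := abs_nonneg s
        linarith
      have htop : ∀ P : M, φ P ≤ 1 / ε := fun P => by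
        have h1 := hs P
        have h2 := le_abs_self s
        have h3 := abs_nonneg k
        linarith
      have hex1 : ∃ P : M, φ P ≤ k + ε := ⟨P0, by linarith⟩
      have hex2 : ∃ P : M, φ P ≤ k - ε := ⟨P0, by linarith⟩
      have h0 : (0 : ℤ) ∈ {z : ℤ | ∃ ε' : ℝ, 0 < ε' ∧ k + ε' < 1 / ε' ∧
          z = (rsf φ (k + ε') (1 / ε') : ℤ) - (rsf φ (k - ε') (1 / ε') : ℤ)} := by
        refine ⟨ε, hε, hk, ?_⟩
        rw [rsf_eq_of_top htop, rsf_eq_of_top htop, if_pos hex1, if_pos hex2]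
        ring
      exact absurd (int_sInf_nonpos h0) (not_le.mpr hpos)
end

section
/- Let (M, φ) be a size pair. For every ε > 0, the reduced size function ℓ*_{(M,φ)} has at most finitely many proper cornerpoints (counted with multiplicity) in the region {(x,y) ∈ ℝ² : x + ε < y}. -/
open Set Topology
open scoped ENNReal

section Aux

variable {M : Type*} [TopologicalSpace M] {φ : M → ℝ}

private def lvl (φ : M → ℝ) (y : ℝ) : Set M := {Q | φ Q ≤ y}

private def cc (φ : M → ℝ) (y : ℝ) (P : M) : Set M := connectedComponentIn (lvl φ y) P

lemma rsf_eq (φ : M → ℝ) (x y : ℝ) : rsf φ x y = (cc φ y '' lvl φ x).ncard := by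
  unfold rsf cc lvl
  congr 1
  ext C
  constructor
  · rintro ⟨P, h1, rfl⟩; exact ⟨P, h1, rfl⟩
  · rintro ⟨P, h1, rfl⟩; exact ⟨P, h1, rfl⟩

lemma S_finite [CompactSpace M] [LocallyConnectedSpace M] (hφ : Continuous φ)
    {x y : ℝ} (hxy : x < y) : (cc φ y '' lvl φ x).Finite := by
  have hK : IsCompact (lvl φ x) := (isClosed_le hφ continuous_const).isCompact
  have hV : IsOpen {Q | φ Q < y} := isOpen_lt hφ continuous_const
  have key : ∀ P : M, ∃ U : Set M,
      P ∈ lvl φ x → (U ∈ 𝓝 P ∧ ∀ Q ∈ U, cc φ y Q = cc φ y P) := by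
    intro P
    by_cases hP : P ∈ lvl φ x
    · have hPV : P ∈ {Q | φ Q < y} := lt_of_le_of_lt hP hxy
      obtain ⟨U, hUV, hUo, hPU, hUc⟩ :=
        locallyConnectedSpace_iff_subsets_isOpen_isConnected.mp ‹_› P _ (hV.mem_nhds hPV)
      refine ⟨U, fun _ => ⟨hUo.mem_nhds hPU, fun Q hQ => ?_⟩⟩
      have hUl : U ⊆ lvl φ y := fun R hR => le_of_lt (show φ R < y from hUV hR)
      have hsub : U ⊆ connectedComponentIn (lvl φ y) P :=
        hUc.isPreconnected.subset_connectedComponentIn hPU hUl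
      exact (connectedComponentIn_eq (hsub hQ)).symm
    · exact ⟨univ, fun h => absurd h hP⟩
  choose U hU using key
  obtain ⟨t, htK, hcov⟩ := hK.elim_nhds_subcover U (fun P hP => (hU P hP).1)
  apply (t.finite_toSet.image (cc φ y)).subset
  rintro C ⟨Q, hQ, rfl⟩
  obtain ⟨P, hPt, hQU⟩ := by simpa using hcov hQ
  exact ⟨P, hPt, ((hU P (htK P hPt)).2 Q hQU).symm⟩

/-- abstract counting lemma -/
lemma ncard_sub_ineq {α β : Type*} {A B : Set α} (hAB : A ⊆ B) (u v : α → β)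
    (h : ∀ P ∈ B, ∀ Q ∈ B, u P = u Q → v P = v Q)
    (hfu : (u '' B).Finite) (hfv : (v '' B).Finite) :
    (u '' A).ncard + (v '' B).ncard ≤ (u '' B).ncard + (v '' A).ncard := by
  classical
  rcases isEmpty_or_nonempty α with hα | hα
  · simp [Set.eq_empty_of_isEmpty A, Set.eq_empty_of_isEmpty B]
  have h1 : (v '' B \ v '' A).ncard ≤ (u '' B \ u '' A).ncard := by
    set w : β → α := fun D => if hD : ∃ P, P ∈ B ∧ v P = D then hD.choose else Classical.arbitrary α
      with hw
    have hwspec : ∀ D ∈ v '' B, w D ∈ B ∧ v (w D) = D := by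
      intro D hD
      obtain ⟨P, hPB, hPD⟩ := hD
      have hex : ∃ P, P ∈ B ∧ v P = D := ⟨P, hPB, hPD⟩
      rw [hw]; simp only [hex, dif_pos]
      exact hex.choose_spec
    refine Set.ncard_le_ncard_of_injOn (fun D => u (w D)) ?_ ?_ hfu.diff
    · rintro D ⟨hDB, hDA⟩
      obtain ⟨hwB, hwv⟩ := hwspec D hDB
      refine ⟨⟨w D, hwB, rfl⟩, ?_⟩
      rintro ⟨Q, hQA, hQu⟩
      exact hDA ⟨Q, hQA, by rw [h Q (hAB hQA) (w D) hwB hQu, hwv]⟩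
    · rintro D ⟨hDB, -⟩ D' ⟨hDB', -⟩ hEq
      obtain ⟨hwB, hwv⟩ := hwspec D hDB
      obtain ⟨hwB', hwv'⟩ := hwspec D' hDB'
      rw [← hwv, ← hwv']
      exact h _ hwB _ hwB' hEq
  have h2 : (v '' B \ v '' A).ncard + (v '' A).ncard = (v '' B).ncard :=
    Set.ncard_diff_add_ncard_of_subset (Set.image_mono (f := v) hAB) hfv
  have h3 : (u '' B \ u '' A).ncard + (u '' A).ncard = (u '' B).ncard :=
    Set.ncard_diff_add_ncard_of_subset (Set.image_mono (f := u) hAB) hfu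
  omega

lemma cc_refines {c d : ℝ} (hcd : c ≤ d) {b : ℝ} (hbc : b < c) :
    ∀ P ∈ lvl φ b, ∀ Q ∈ lvl φ b, cc φ c P = cc φ c Q → cc φ d P = cc φ d Q := by
  intro P hP Q hQ hEq
  have hPc : P ∈ lvl φ c := le_of_lt (lt_of_le_of_lt hP hbc)
  have hQc : Q ∈ lvl φ c := le_of_lt (lt_of_le_of_lt hQ hbc)
  have hQmem : Q ∈ cc φ c P := by
    rw [hEq]; exact mem_connectedComponentIn hQc
  have hsub : cc φ c P ⊆ connectedComponentIn (lvl φ d) P := by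
    apply IsPreconnected.subset_connectedComponentIn
    · exact isPreconnected_connectedComponentIn
    · exact mem_connectedComponentIn hPc
    · exact (connectedComponentIn_subset _ _).trans (fun R hR => le_trans hR hcd)
  exact connectedComponentIn_eq (hsub hQmem)

variable [CompactSpace M] [LocallyConnectedSpace M]

lemma rsf_mono_x (hφ : Continuous φ) {a b y : ℝ} (hab : a ≤ b) (hby : b < y) :
    rsf φ a y ≤ rsf φ b y := by
  rw [rsf_eq, rsf_eq]
  exact Set.ncard_le_ncard (Set.image_mono (fun P hP => le_trans hP hab)) (S_finite hφ hby)

lemma rsf_anti_y (hφ : Continuous φ) {x c d : ℝ} (hxc : x < c) (hcd : c ≤ d) :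
    rsf φ x d ≤ rsf φ x c := by
  rw [rsf_eq, rsf_eq]
  have := ncard_sub_ineq (A := (∅ : Set M)) (B := lvl φ x) (empty_subset _)
    (cc φ c) (cc φ d) (cc_refines hcd hxc) (S_finite hφ hxc) (S_finite hφ (lt_of_lt_of_le hxc hcd))
  simpa using this

lemma rsf_rect (hφ : Continuous φ) {a b c d : ℝ} (hab : a ≤ b) (hbc : b < c) (hcd : c ≤ d) :
    rsf φ a c + rsf φ b d ≤ rsf φ b c + rsf φ a d := by
  rw [rsf_eq, rsf_eq, rsf_eq, rsf_eq]
  exact ncard_sub_ineq (fun P hP => le_trans hP hab) (cc φ c) (cc φ d)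
    (cc_refines hcd hbc) (S_finite hφ hbc) (S_finite hφ (lt_of_lt_of_le hbc hcd))

end Aux




section Aux2

variable {M : Type*} [TopologicalSpace M] {φ : M → ℝ}

lemma int_pos_of_mem {T : Set ℤ} (hT : 0 < sInf T) {z : ℤ} (hz : z ∈ T) : 0 < z := by
  have hbdd : BddBelow T := by
    by_contra hb
    rw [Int.csInf_of_not_bddBelow hb] at hT
    exact lt_irrefl 0 hT
  exact lt_of_lt_of_le hT (csInf_le hbdd hz)

lemma mult_jump {x y : ℝ} (h : 0 < mult φ (x, y)) {e : ℝ} (he : 0 < e) (hxy : x + e < y - e) :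
    (rsf φ (x - e) (y - e) : ℤ) + (rsf φ (x + e) (y + e) : ℤ) + 1
      ≤ (rsf φ (x + e) (y - e) : ℤ) + (rsf φ (x - e) (y + e) : ℤ) := by
  have h2 := int_pos_of_mem h (z := (rsf φ (x + e) (y - e) : ℤ) - (rsf φ (x - e) (y - e) : ℤ)
      - (rsf φ (x + e) (y + e) : ℤ) + (rsf φ (x - e) (y + e) : ℤ)) ⟨e, he, hxy, rfl⟩
  omega

lemma rsf_empty {u v : ℝ} (hu : ∀ P : M, ¬ φ P ≤ u) : rsf φ u v = 0 := by
  unfold rsf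
  convert Set.ncard_empty (Set M)
  ext C
  simp only [Set.mem_setOf_eq, Set.mem_empty_iff_false, iff_false, not_exists]
  exact fun P hP => absurd hP.1 (hu P)

lemma rsf_congr_y {x' v v' : ℝ} (h : {Q : M | φ Q ≤ v} = {Q : M | φ Q ≤ v'}) :
    rsf φ x' v = rsf φ x' v' := by
  unfold rsf
  simp only [h]

/-- 1D jump counting -/
lemma jump_finite {e₀ : ℝ} (he₀ : 0 < e₀) (g : ℝ → ℕ) (mono : Monotone g) (N : ℕ)
    (hbd : ∀ t, g t ≤ N) (J : Set ℝ)
    (hJ : ∀ x ∈ J, ∀ e : ℝ, 0 < e → e < e₀ → g (x - e) + 1 ≤ g (x + e)) : J.Finite := by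
  by_contra hinf
  obtain ⟨F, hFJ, hFcard⟩ := Set.Infinite.exists_subset_card_eq hinf (N + 1)
  have key : ∀ n (F : Finset ℝ), F.card = n → ↑F ⊆ J → ∀ y : ℝ, (∀ x ∈ F, x < y) → n ≤ g y := by
    intro n
    induction n with
    | zero => intro F _ _ y _; exact Nat.zero_le _
    | succ n ih =>
      intro F hcard hFJ y hy
      have hne : F.Nonempty := Finset.card_pos.mp (by omega)
      set x := F.max' hne with hxdef
      have hxmem : x ∈ F := F.max'_mem hne
      have hxJ : x ∈ J := hFJ hxmem
      set F' := F.erase x with hF'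
      have hcard' : F'.card = n := by rw [hF', Finset.card_erase_of_mem hxmem]; omega
      have hxy : x < y := hy x hxmem
      have he : ∃ e : ℝ, 0 < e ∧ e < e₀ ∧ x + e ≤ y ∧ ∀ x' ∈ F', x' < x - e := by
        rcases F'.eq_empty_or_nonempty with hFe | hFne
        · refine ⟨min (e₀/2) ((y - x)/2), lt_min (by linarith) (by linarith), ?_, ?_, ?_⟩
          · calc min (e₀/2) ((y-x)/2) ≤ e₀/2 := min_le_left _ _
              _ < e₀ := by linarith
          · have := min_le_right (e₀/2) ((y-x)/2); linarith
          · intro x' hx'; rw [hFe] at hx'; simp at hx'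
        · set x' := F'.max' hFne with hx'def
          have hx'F : x' ∈ F' := F'.max'_mem hFne
          have hx'x : x' < x :=
            lt_of_le_of_ne (F.le_max' _ (Finset.mem_of_mem_erase hx'F))
              (Finset.ne_of_mem_erase hx'F)
          refine ⟨min (min (e₀/2) ((y - x)/2)) ((x - x')/2),
            lt_min (lt_min (by linarith) (by linarith)) (by linarith), ?_, ?_, ?_⟩
          · have h1 := min_le_left (min (e₀/2) ((y-x)/2)) ((x - x')/2)
            have h2 := min_le_left (e₀/2) ((y-x)/2)
            linarith
          · have h1 := min_le_left (min (e₀/2) ((y-x)/2)) ((x - x')/2)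
            have h2 := min_le_right (e₀/2) ((y-x)/2)
            linarith
          · intro z hz
            have h1 := min_le_right (min (e₀/2) ((y-x)/2)) ((x - x')/2)
            have h2 : z ≤ x' := F'.le_max' z hz
            linarith
      obtain ⟨e, he0, hee0, hey, helt⟩ := he
      have h1 : n ≤ g (x - e) :=
        ih F' hcard' (fun z hz => hFJ (Finset.mem_of_mem_erase hz)) (x - e) helt
      have h2 := hJ x hxJ e he0 hee0
      have h3 : g (x + e) ≤ g y := mono (by linarith)
      omega
  have hne : F.Nonempty := Finset.card_pos.mp (by omega)
  have hbig := key (N + 1) F hFcard hFJ (F.max' hne + 1)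
    (fun x hx => lt_of_le_of_lt (F.le_max' x hx) (by linarith))
  have := hbd (F.max' hne + 1)
  omega

/-- covering by strips -/
lemma strip_finite {m₁ m₂ δ : ℝ} (hδ : 0 < δ) (Z : Set ℝ) (hZ : Z ⊆ Icc m₁ m₂)
    (hfin : ∀ t : ℝ, (Z ∩ Ico t (t + δ)).Finite) : Z.Finite := by
  set K := ⌈(m₂ - m₁)/δ⌉₊ with hK
  have hcov : Z ⊆ ⋃ k ∈ Finset.range (K+1), (Z ∩ Ico (m₁ + k*δ) (m₁ + k*δ + δ)) := by
    intro z hz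
    obtain ⟨h1, h2⟩ := hZ hz
    set k := ⌊(z - m₁)/δ⌋₊ with hk
    have hnn : (0:ℝ) ≤ (z - m₁)/δ := div_nonneg (by linarith) hδ.le
    have hk1 : (k : ℝ) * δ ≤ z - m₁ := by
      have h := Nat.floor_le hnn
      have := mul_le_mul_of_nonneg_right h hδ.le
      rwa [div_mul_cancel₀ _ (ne_of_gt hδ)] at this
    have hk2 : z - m₁ < ((k:ℝ) + 1) * δ :=
      (div_lt_iff₀ hδ).mp (Nat.lt_floor_add_one ((z - m₁)/δ))
    have hkK : k ≤ K := by
      calc k ≤ ⌊(m₂ - m₁)/δ⌋₊ :=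
            Nat.floor_le_floor ((div_le_div_iff_of_pos_right hδ).mpr (by linarith))
        _ ≤ K := Nat.floor_le_ceil _
    simp only [Finset.mem_range, Set.mem_iUnion, Set.mem_inter_iff, Set.mem_Ico]
    exact ⟨k, by omega, hz, by linarith, by nlinarith [hk2]⟩
  exact (Set.Finite.biUnion (Finset.range (K+1)).finite_toSet (fun k _ => hfin _)).subset hcov

end Aux2

section Rest

variable {M : Type*} [TopologicalSpace M] {φ : M → ℝ}

lemma cornerpoint_bounds [CompactSpace M] {zmin zmax : M}
    (hmin : ∀ w, φ zmin ≤ φ w) (hmax : ∀ w, φ w ≤ φ zmax)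
    {x y : ℝ} (hxy : x < y) (h : 0 < mult φ (x, y)) :
    φ zmin ≤ x ∧ y ≤ φ zmax := by
  constructor
  · by_contra hc
    push_neg at hc
    set e := min ((y - x)/4) ((φ zmin - x)/2) with hedef
    have he1 : e ≤ (y - x)/4 := min_le_left _ _
    have he2 : e ≤ (φ zmin - x)/2 := min_le_right _ _
    have he : 0 < e := lt_min (by linarith) (by linarith)
    have hv : x + e < y - e := by linarith
    have hkey := mult_jump h he hv
    have hu : ∀ P : M, ¬ φ P ≤ x + e := fun P hP => absurd (le_trans (hmin P) hP) (by linarith)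
    have hu' : ∀ P : M, ¬ φ P ≤ x - e := fun P hP => absurd (le_trans (hmin P) hP) (by linarith)
    simp only [rsf_empty hu, rsf_empty hu'] at hkey
    omega
  · by_contra hc
    push_neg at hc
    set e := min ((y - x)/4) ((y - φ zmax)/2) with hedef
    have he1 : e ≤ (y - x)/4 := min_le_left _ _
    have he2 : e ≤ (y - φ zmax)/2 := min_le_right _ _
    have he : 0 < e := lt_min (by linarith) (by linarith)
    have hv : x + e < y - e := by linarith
    have hset : {Q : M | φ Q ≤ y - e} = {Q : M | φ Q ≤ y + e} := by
      ext Q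
      simp only [Set.mem_setOf_eq]
      constructor
      · intro _; linarith [hmax Q]
      · intro _; linarith [hmax Q]
    have hkey := mult_jump h he hv
    rw [rsf_congr_y (x' := x - e) hset, rsf_congr_y (x' := x + e) hset] at hkey
    omega

end Rest

theorem local_finiteness_of_cornerpoints
    {M : Type*} [TopologicalSpace M] [CompactSpace M] [ConnectedSpace M] [LocallyConnectedSpace M] [T2Space M] {φ : M → ℝ} (hφ : Continuous φ)
    (ε : ℝ) (hε : 0 < ε) :
    {p : ℝ × ℝ | p.1 + ε < p.2 ∧ 0 < mult φ p}.Finite := by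
  obtain ⟨zmin, -, hmin'⟩ := isCompact_univ.exists_isMinOn univ_nonempty hφ.continuousOn
  obtain ⟨zmax, -, hmax'⟩ := isCompact_univ.exists_isMaxOn univ_nonempty hφ.continuousOn
  have hmin : ∀ w, φ zmin ≤ φ w := fun w => isMinOn_iff.mp hmin' w (mem_univ w)
  have hmax : ∀ w, φ w ≤ φ zmax := fun w => isMaxOn_iff.mp hmax' w (mem_univ w)
  set P := {p : ℝ × ℝ | p.1 + ε < p.2 ∧ 0 < mult φ p} with hPdef
  have hbnd : ∀ p ∈ P, φ zmin ≤ p.1 ∧ p.2 ≤ φ zmax := by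
    rintro ⟨x, y⟩ ⟨h1, h2⟩
    exact cornerpoint_bounds hmin hmax (by linarith) h2
  have hm12 : φ zmin ≤ φ zmax := hmax zmin
  have hXfin : (Prod.fst '' P).Finite := by
    apply strip_finite (m₁ := φ zmin) (m₂ := φ zmax) (δ := ε/4) (by linarith)
    · rintro _ ⟨⟨x, y⟩, hp, rfl⟩
      obtain ⟨hb1, hb2⟩ := hbnd _ hp
      have h1 : x + ε < y := hp.1
      exact ⟨hb1, by simp only; linarith⟩
    · intro t
      refine jump_finite (e₀ := ε/8) (by linarith)
        (fun s => rsf φ (min s (t + 3*ε/8)) (t + ε/2)) ?_ (rsf φ (t + 3*ε/8) (t + ε/2)) ?_ _ ?_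
      · intro s s' hss'
        exact rsf_mono_x hφ (min_le_min hss' le_rfl)
          (lt_of_le_of_lt (min_le_right _ _) (by linarith))
      · intro s
        exact rsf_mono_x hφ (min_le_right _ _) (by linarith)
      · rintro w ⟨hw1, hwIco⟩
        obtain ⟨⟨x, y⟩, hpP, hfst⟩ := hw1
        simp only at hfst
        subst hfst
        obtain ⟨hxt, hxt'⟩ := hwIco
        intro e he1 he2
        have hy : x + ε < y := hpP.1
        have hv : x + e < y - e := by linarith
        have hkey := mult_jump hpP.2 he1 hv
        have hxm : rsf φ (x - e) (y + e) ≤ rsf φ (x + e) (y + e) :=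
          rsf_mono_x hφ (by linarith) (by linarith)
        have hrect := rsf_rect hφ (a := x - e) (b := x + e) (c := t + ε/2) (d := y - e)
          (by linarith) (by linarith) (by linarith)
        have hmin1 : min (x - e) (t + 3*ε/8) = x - e := min_eq_left (by linarith)
        have hmin2 : min (x + e) (t + 3*ε/8) = x + e := min_eq_left (by linarith)
        simp only [hmin1, hmin2]
        omega
  have hYfin : (Prod.snd '' P).Finite := by
    have hJ2 : ((fun s : ℝ => -s) '' (Prod.snd '' P)).Finite := by
      apply strip_finite (m₁ := -(φ zmax)) (m₂ := -(φ zmin)) (δ := ε/4) (by linarith)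
      · rintro _ ⟨_, ⟨⟨x, y⟩, hp, rfl⟩, rfl⟩
        obtain ⟨hb1, hb2⟩ := hbnd _ hp
        have h1 : x + ε < y := hp.1
        constructor
        · simp only; linarith
        · simp only; linarith
      · intro t
        refine jump_finite (e₀ := ε/8) (by linarith)
          (fun s => rsf φ (-t - 3*ε/4) (max (-s) (-t - 3*ε/8))) ?_
          (rsf φ (-t - 3*ε/4) (-t - 3*ε/8)) ?_ _ ?_
        · intro s s' hss'
          exact rsf_anti_y hφ (lt_of_lt_of_le (by linarith) (le_max_right _ _))
            (max_le_max (neg_le_neg hss') le_rfl)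
        · intro s
          exact rsf_anti_y hφ (by linarith) (le_max_right _ _)
        · rintro z ⟨⟨w, ⟨⟨x, y⟩, hpP, rfl⟩, rfl⟩, hzIco⟩
          simp only at hzIco
          obtain ⟨hzt, hzt'⟩ := hzIco
          -- hzt : t ≤ -y, hzt' : -y < t + ε/4
          intro e he1 he2
          have hy : x + ε < y := hpP.1
          have hv : x + e < y - e := by linarith
          have hkey := mult_jump hpP.2 he1 hv
          have hym : rsf φ (x - e) (y + e) ≤ rsf φ (x - e) (y - e) :=
            rsf_anti_y hφ (by linarith) (by linarith)
          have hrect := rsf_rect hφ (a := x + e) (b := -t - 3*ε/4) (c := y - e) (d := y + e)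
            (by linarith) (by linarith) (by linarith)
          have hmax1 : max (-((-y : ℝ) - e)) (-t - 3*ε/8) = y + e := by
            rw [show -((-y : ℝ) - e) = y + e by ring]
            exact max_eq_left (by linarith)
          have hmax2 : max (-((-y : ℝ) + e)) (-t - 3*ε/8) = y - e := by
            rw [show -((-y : ℝ) + e) = y - e by ring]
            exact max_eq_left (by linarith)
          simp only [hmax1, hmax2]
          omega
    have himg : Prod.snd '' P = (fun s : ℝ => -s) '' ((fun s : ℝ => -s) '' (Prod.snd '' P)) := by
      rw [Set.image_image]
      simp
    rw [himg]
    exact hJ2.image _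
  exact (hXfin.prod hYfin).subset (fun p hp => Set.mem_prod.mpr ⟨⟨p, hp, rfl⟩, ⟨p, hp, rfl⟩⟩)
end

section
/- The function d on the extended closed half-plane Δ̄* defined by d((x,y),(x',y')) := min{ max{|x−x'|, |y−y'|}, max{(y−x)/2, (y'−x')/2} } (with the standard conventions for ∞) is a pseudo-metric: it is symmetric, vanishes on the diagonal of its arguments, and satisfies the triangle inequality. -/
open Set Topology
open scoped ENNReal

lemma key_tri (x y x' y' z w : ℝ) (hq : x' ≤ y') :
    min (max |x - z| |y - w|) (max ((y - x)/2) ((w - z)/2)) ≤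
    min (max |x - x'| |y - y'|) (max ((y - x)/2) ((y' - x')/2)) +
    min (max |x' - z| |y' - w|) (max ((y' - x')/2) ((w - z)/2)) := by
  have a1 : |x - x'| ≤ max |x - x'| |y - y'| := le_max_left _ _
  have a2 : |y - y'| ≤ max |x - x'| |y - y'| := le_max_right _ _
  have a3 : |x' - z| ≤ max |x' - z| |y' - w| := le_max_left _ _
  have a4 : |y' - w| ≤ max |x' - z| |y' - w| := le_max_right _ _
  have b1 : (y - x)/2 ≤ max ((y - x)/2) ((y' - x')/2) := le_max_left _ _
  have b1' : (y' - x')/2 ≤ max ((y - x)/2) ((y' - x')/2) := le_max_right _ _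
  have b2 : (y' - x')/2 ≤ max ((y' - x')/2) ((w - z)/2) := le_max_left _ _
  have b2' : (w - z)/2 ≤ max ((y' - x')/2) ((w - z)/2) := le_max_right _ _
  have hA : max |x - z| |y - w| ≤ max |x - x'| |y - y'| + max |x' - z| |y' - w| := by
    apply max_le
    · calc |x - z| ≤ |x - x'| + |x' - z| := abs_sub_le _ _ _
        _ ≤ _ := add_le_add a1 a3
    · calc |y - w| ≤ |y - y'| + |y' - w| := abs_sub_le _ _ _
        _ ≤ _ := add_le_add a2 a4
  have hB1 : max ((y - x)/2) ((w - z)/2)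
      ≤ max |x - x'| |y - y'| + max ((y' - x')/2) ((w - z)/2) := by
    apply max_le
    · have h1 : y - y' ≤ |y - y'| := le_abs_self _
      have h2 : x' - x ≤ |x - x'| := by rw [abs_sub_comm]; exact le_abs_self _
      linarith
    · have h0 : (0:ℝ) ≤ |x - x'| := abs_nonneg _
      linarith
  have hB2 : max ((y - x)/2) ((w - z)/2)
      ≤ max ((y - x)/2) ((y' - x')/2) + max |x' - z| |y' - w| := by
    apply max_le
    · have h0 : (0:ℝ) ≤ |x' - z| := abs_nonneg _
      linarith
    · have h1 : w - y' ≤ |y' - w| := by rw [abs_sub_comm]; exact le_abs_self _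
      have h2 : x' - z ≤ |x' - z| := le_abs_self _
      linarith
  have hB3 : max ((y - x)/2) ((w - z)/2)
      ≤ max ((y - x)/2) ((y' - x')/2) + max ((y' - x')/2) ((w - z)/2) := by
    apply max_le <;> linarith
  rcases min_cases (max |x - x'| |y - y'|) (max ((y - x)/2) ((y' - x')/2)) with ⟨h1, -⟩ | ⟨h1, -⟩ <;>
    rcases min_cases (max |x' - z| |y' - w|) (max ((y' - x')/2) ((w - z)/2)) with ⟨h2, -⟩ | ⟨h2, -⟩ <;>
    rw [h1, h2]
  · exact le_trans (min_le_left _ _) hA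
  · exact le_trans (min_le_right _ _) hB1
  · exact le_trans (min_le_right _ _) hB2
  · exact le_trans (min_le_right _ _) hB3


theorem eDist_is_pseudometric
    (p q r : ℝ × EReal)
    (hp : (p.1 : EReal) ≤ p.2) (hq : (q.1 : EReal) ≤ q.2) (hr : (r.1 : EReal) ≤ r.2) :
    eDist p p = 0 ∧ eDist p q = eDist q p ∧ eDist p r ≤ eDist p q + eDist q r := by
  have toR : ∀ s : ℝ × EReal, (s.1 : EReal) ≤ s.2 → s.2 ≠ ⊤ → s.1 ≤ s.2.toReal := by
    intro s hs hne
    have hb : s.2 ≠ ⊥ := fun h => by simp [h] at hs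
    have := EReal.coe_toReal hne hb
    exact_mod_cast this.symm ▸ hs
  refine ⟨?_, ?_, ?_⟩
  · by_cases hP : p.2 = ⊤
    · simp [eDist, hP]
    · have hx : p.1 ≤ p.2.toReal := toR p hp hP
      simp only [eDist, hP, and_self, if_false, or_self, sub_self, abs_zero, max_self]
      rw [ENNReal.ofReal_eq_zero]
      exact min_le_left _ _
  · by_cases hP : p.2 = ⊤ <;> by_cases hQ : q.2 = ⊤
    · simp only [eDist, hP, hQ, and_self, if_true]
      rw [abs_sub_comm]
    · simp [eDist, hP, hQ]
    · simp [eDist, hP, hQ]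
    · simp only [eDist, hP, hQ, and_self, false_and, and_false, or_self, if_false]
      rw [abs_sub_comm q.1 p.1, abs_sub_comm q.2.toReal p.2.toReal,
        max_comm ((q.2.toReal - q.1) / 2)]
  · by_cases hP : p.2 = ⊤ <;> by_cases hQ : q.2 = ⊤ <;> by_cases hR : r.2 = ⊤
    · simp only [eDist, hP, hQ, hR, and_self, if_true]
      rw [← ENNReal.ofReal_add (abs_nonneg _) (abs_nonneg _)]
      exact ENNReal.ofReal_le_ofReal (abs_sub_le _ _ _)
    · have h : eDist q r = ⊤ := by simp [eDist, hQ, hR]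
      rw [h, add_top]; exact le_top
    · have h : eDist p q = ⊤ := by simp [eDist, hP, hQ]
      rw [h, top_add]; exact le_top
    · have h : eDist p q = ⊤ := by simp [eDist, hP, hQ]
      rw [h, top_add]; exact le_top
    · have h : eDist p q = ⊤ := by simp [eDist, hP, hQ]
      rw [h, top_add]; exact le_top
    · have h : eDist q r = ⊤ := by simp [eDist, hQ, hR]
      rw [h, add_top]; exact le_top
    · have h : eDist q r = ⊤ := by simp [eDist, hQ, hR]
      rw [h, add_top]; exact le_top
    · have hxp : p.1 ≤ p.2.toReal := toR p hp hP
      have hxq : q.1 ≤ q.2.toReal := toR q hq hQ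
      have hxr : r.1 ≤ r.2.toReal := toR r hr hR
      simp only [eDist, hP, hQ, hR, and_self, false_and, and_false, or_self, if_false]
      have h1 : (0:ℝ) ≤ min (max |p.1 - q.1| |p.2.toReal - q.2.toReal|)
          (max ((p.2.toReal - p.1) / 2) ((q.2.toReal - q.1) / 2)) :=
        le_min (le_max_of_le_left (abs_nonneg _)) (le_max_of_le_left (by linarith))
      have h2 : (0:ℝ) ≤ min (max |q.1 - r.1| |q.2.toReal - r.2.toReal|)
          (max ((q.2.toReal - q.1) / 2) ((r.2.toReal - r.1) / 2)) :=
        le_min (le_max_of_le_left (abs_nonneg _)) (le_max_of_le_left (by linarith))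
      rw [← ENNReal.ofReal_add h1 h2]
      exact ENNReal.ofReal_le_ofReal (key_tri p.1 p.2.toReal q.1 q.2.toReal r.1 r.2.toReal hxq)
end

section
/- Local constancy of multiplicity: Let (M,φ) be a size pair and p̄ = (x̄,ȳ) ∈ Δ⁺ with multiplicity μ(p̄) ≥ 0 for ℓ*_{(M,φ)}. Then there exists η̄ > 0 such that for every 0 ≤ η ≤ η̄ and every continuous ψ : M → ℝ with max_{P∈M} |φ(P) − ψ(P)| ≤ η, the reduced size function ℓ*_{(M,ψ)} has exactly μ(p̄) proper cornerpoints, counted with multiplicity, in the closed square centered at p̄ with sides of length 2η parallel to the axes. -/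
open Set Topology
open scoped ENNReal

namespace LCM

variable {M : Type*} [TopologicalSpace M]

/-- The set of connected components of `B` meeting `A`. -/
def comps (A B : Set M) : Set (Set M) := {C | ∃ P, P ∈ A ∧ C = connectedComponentIn B P}

lemma rsf_eq (φ : M → ℝ) (x y : ℝ) :
    rsf φ x y = (comps {P | φ P ≤ x} {Q | φ Q ≤ y}).ncard := rfl

lemma comps_mono {A A' B : Set M} (h : A ⊆ A') : comps A B ⊆ comps A' B := by
  rintro C ⟨P, hP, rfl⟩; exact ⟨P, h hP, rfl⟩

lemma comps_finite [CompactSpace M] [LocallyConnectedSpace M] {A U B : Set M}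
    (hA : IsClosed A) (hU : IsOpen U) (hAU : A ⊆ U) (hUB : U ⊆ B) :
    (comps A B).Finite := by
  have hAc : IsCompact A := hA.isCompact
  have hcov : A ⊆ ⋃ P ∈ A, connectedComponentIn U P := by
    intro P hP
    exact Set.mem_biUnion hP (mem_connectedComponentIn (hAU hP))
  obtain ⟨t, htA, htfin, hcov'⟩ := hAc.elim_finite_subcover_image
    (fun P _ => hU.connectedComponentIn) hcov
  apply (htfin.image (fun P => connectedComponentIn B P)).subset
  rintro C ⟨Q, hQ, rfl⟩
  obtain ⟨P, hPt, hQP⟩ : ∃ P ∈ t, Q ∈ connectedComponentIn U P := by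
    simpa using hcov' hQ
  refine ⟨P, hPt, ?_⟩
  have hsub : connectedComponentIn U P ⊆ connectedComponentIn B P :=
    isPreconnected_connectedComponentIn.subset_connectedComponentIn
      (mem_connectedComponentIn (hAU (htA hPt)))
      ((connectedComponentIn_subset U P).trans hUB)
  exact connectedComponentIn_eq (hsub hQP)

/-- Push a component of `B` to the component of `B'` containing it. -/
def pushCC (B' : Set M) (C : Set M) : Set M := ⋃ P ∈ C, connectedComponentIn B' P

lemma pushCC_eq {B B' : Set M} (hBB' : B ⊆ B') {P : M} (hP : P ∈ B) :
    pushCC B' (connectedComponentIn B P) = connectedComponentIn B' P := by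
  have hsub : connectedComponentIn B P ⊆ connectedComponentIn B' P :=
    isPreconnected_connectedComponentIn.subset_connectedComponentIn
      (mem_connectedComponentIn hP) ((connectedComponentIn_subset B P).trans hBB')
  apply Set.Subset.antisymm
  · refine Set.iUnion₂_subset fun Q hQ => ?_
    rw [← connectedComponentIn_eq (hsub hQ)]
  · exact Set.subset_biUnion_of_mem (u := fun Q => connectedComponentIn B' Q)
      (mem_connectedComponentIn hP)

lemma comps_push {A B B' : Set M} (hBB' : B ⊆ B') (hAB : A ⊆ B) :
    comps A B' = pushCC B' '' comps A B := by
  ext C; constructor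
  · rintro ⟨P, hP, rfl⟩
    exact ⟨connectedComponentIn B P, ⟨P, hP, rfl⟩, pushCC_eq hBB' (hAB hP)⟩
  · rintro ⟨D, ⟨P, hP, rfl⟩, rfl⟩
    exact ⟨P, hP, pushCC_eq hBB' (hAB hP)⟩


/-- The fundamental 4-term inequality on component counts. -/
lemma key4 {A A' B B' : Set M} (hAA' : A ⊆ A') (hA'B : A' ⊆ B) (hBB' : B ⊆ B')
    (hfin : (comps A' B).Finite) :
    (comps A' B').ncard + (comps A B).ncard ≤ (comps A' B).ncard + (comps A B').ncard := by
  set S := comps A' B with hS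
  set T := comps A B with hT
  have hTS : T ⊆ S := comps_mono hAA'
  have hTfin : T.Finite := hfin.subset hTS
  have hS' : comps A' B' = pushCC B' '' S := comps_push hBB' hA'B
  have hT' : comps A B' = pushCC B' '' T := comps_push hBB' (hAA'.trans hA'B)
  have hclaim : comps A' B' ⊆ (pushCC B' '' (S \ T)) ∪ comps A B' := by
    rw [hS', hT']
    rintro C ⟨D, hD, rfl⟩
    by_cases hDT : D ∈ T
    · exact Or.inr ⟨D, hDT, rfl⟩
    · exact Or.inl ⟨D, ⟨hD, hDT⟩, rfl⟩
  have h1 : (comps A' B').ncard ≤ (S \ T).ncard + (comps A B').ncard := by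
    calc (comps A' B').ncard
        ≤ ((pushCC B' '' (S \ T)) ∪ comps A B').ncard :=
          Set.ncard_le_ncard hclaim
            (((hfin.diff : (S \ T).Finite).image _).union (hT' ▸ hTfin.image _))
      _ ≤ (pushCC B' '' (S \ T)).ncard + (comps A B').ncard := Set.ncard_union_le _ _
      _ ≤ (S \ T).ncard + (comps A B').ncard :=
          add_le_add_left (Set.ncard_image_le (hfin.diff : (S \ T).Finite)) _
  have h2 : (S \ T).ncard + T.ncard = S.ncard := Set.ncard_diff_add_ncard_of_subset hTS hfin
  omega

end LCM
namespace LCM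

variable {M : Type*} [TopologicalSpace M]

def sub (ξ : M → ℝ) (t : ℝ) : Set M := {P | ξ P ≤ t}

lemma rsf_eq' (ξ : M → ℝ) (x y : ℝ) :
    rsf ξ x y = (comps (sub ξ x) (sub ξ y)).ncard := rfl

lemma sub_mono {ξ : M → ℝ} {s t : ℝ} (h : s ≤ t) : sub ξ s ⊆ sub ξ t :=
  fun _ hP => le_trans hP h

lemma sub_closed {ξ : M → ℝ} (hξ : Continuous ξ) (t : ℝ) : IsClosed (sub ξ t) :=
  isClosed_le hξ continuous_const

lemma comps_sub_finite [CompactSpace M] [LocallyConnectedSpace M]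
    {ξ ζ : M → ℝ} (hξ : Continuous ξ) {s t : ℝ}
    (h : sub ξ s ⊆ {P | ζ P < t}) (hζ : Continuous ζ) :
    (comps (sub ξ s) (sub ζ t)).Finite :=
  comps_finite (sub_closed hξ s) (isOpen_lt hζ continuous_const) h
    (fun P hP => show ζ P ≤ t from le_of_lt hP)

noncomputable def NN (ξ : M → ℝ) (a a' b b' : ℝ) : ℤ :=
  (rsf ξ a' b : ℤ) - rsf ξ a b - rsf ξ a' b' + rsf ξ a b'

variable [CompactSpace M] [LocallyConnectedSpace M]

lemma NN_nonneg {ξ : M → ℝ} (hξ : Continuous ξ) {a a' b b' : ℝ}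
    (h1 : a ≤ a') (h2 : a' < b) (h3 : b ≤ b') : 0 ≤ NN ξ a a' b b' := by
  have hfin : (comps (sub ξ a') (sub ξ b)).Finite :=
    comps_sub_finite hξ (fun P hP => lt_of_le_of_lt hP h2) hξ
  have K := key4 (sub_mono (ξ := ξ) h1) (sub_mono (ξ := ξ) h2.le)
    (sub_mono (ξ := ξ) h3) hfin
  simp only [NN, rsf_eq']
  omega

lemma NN_split_x (ξ : M → ℝ) (a s a' b b' : ℝ) :
    NN ξ a a' b b' = NN ξ a s b b' + NN ξ s a' b b' := by
  simp only [NN]; ring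

lemma NN_split_y (ξ : M → ℝ) (a a' b t b' : ℝ) :
    NN ξ a a' b b' = NN ξ a a' b t + NN ξ a a' t b' := by
  simp only [NN]; ring

lemma NN_mono {ξ : M → ℝ} (hξ : Continuous ξ) {a a' b b' a₁ a₁' b₁ b₁' : ℝ}
    (h1 : a ≤ a₁) (h2 : a₁ ≤ a₁') (h3 : a₁' ≤ a') (h4 : b ≤ b₁) (h5 : b₁ ≤ b₁')
    (h6 : b₁' ≤ b') (h7 : a' < b) :
    NN ξ a₁ a₁' b₁ b₁' ≤ NN ξ a a' b b' := by
  have e1 : NN ξ a a' b₁ b₁' = NN ξ a a₁ b₁ b₁' + NN ξ a₁ a₁' b₁ b₁' + NN ξ a₁' a' b₁ b₁' := by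
    simp only [NN]; ring
  have e2 : NN ξ a a' b b' = NN ξ a a' b b₁ + NN ξ a a' b₁ b₁' + NN ξ a a' b₁' b' := by
    simp only [NN]; ring
  have n1 : 0 ≤ NN ξ a a₁ b₁ b₁' := NN_nonneg hξ h1 (lt_of_le_of_lt (h2.trans h3) (h7.trans_le h4)) h5
  have n2 : 0 ≤ NN ξ a₁' a' b₁ b₁' := NN_nonneg hξ h3 (h7.trans_le h4) h5
  have n3 : 0 ≤ NN ξ a a' b b₁ := NN_nonneg hξ (h1.trans (h2.trans h3)) h7 h4
  have n4 : 0 ≤ NN ξ a a' b₁' b' := NN_nonneg hξ (h1.trans (h2.trans h3))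
    (h7.trans_le (h4.trans h5)) h6
  linarith

/-- the multiplicity equals `NN` of all sufficiently small centered squares. -/
lemma mult_spec {ξ : M → ℝ} (hξ : Continuous ξ) {x y : ℝ} (h : x < y) :
    0 ≤ mult ξ (x, y) ∧ ∃ ε₀, 0 < ε₀ ∧ x + ε₀ < y - ε₀ ∧
      ∀ ε, 0 < ε → ε ≤ ε₀ → NN ξ (x - ε) (x + ε) (y - ε) (y + ε) = mult ξ (x, y) := by
  set Z : Set ℤ := {z : ℤ | ∃ ε : ℝ, 0 < ε ∧ x + ε < y - ε ∧
    z = (rsf ξ (x + ε) (y - ε) : ℤ) - (rsf ξ (x - ε) (y - ε) : ℤ)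
      - (rsf ξ (x + ε) (y + ε) : ℤ) + (rsf ξ (x - ε) (y + ε) : ℤ)} with hZ
  have hmult : mult ξ (x, y) = sInf Z := rfl
  have hmem : ∀ ε, 0 < ε → x + ε < y - ε → NN ξ (x - ε) (x + ε) (y - ε) (y + ε) ∈ Z := by
    intro ε h1 h2
    exact ⟨ε, h1, h2, rfl⟩
  have hne : Z.Nonempty := by
    have h1 : (0:ℝ) < (y - x) / 4 := by linarith
    have h2 : x + (y - x) / 4 < y - (y - x) / 4 := by linarith
    exact ⟨_, hmem _ h1 h2⟩
  have hlb : ∀ z ∈ Z, (0 : ℤ) ≤ z := by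
    rintro z ⟨ε, h1, h2, rfl⟩
    have := NN_nonneg hξ (by linarith : x - ε ≤ x + ε) h2 (by linarith : y - ε ≤ y + ε)
    simp only [NN] at this; linarith
  have hbdd : BddBelow Z := ⟨0, fun z hz => hlb z hz⟩
  have hInfmem : sInf Z ∈ Z := Int.csInf_mem hne hbdd
  obtain ⟨ε₀, hε₀, hgap, hval⟩ := hInfmem
  constructor
  · rw [hmult]; exact le_csInf hne hlb
  · refine ⟨ε₀, hε₀, hgap, fun ε h1 h2 => ?_⟩
    have hub : NN ξ (x - ε) (x + ε) (y - ε) (y + ε) ≤ mult ξ (x, y) := by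
      have := NN_mono hξ (by linarith : x - ε₀ ≤ x - ε) (by linarith : x - ε ≤ x + ε)
        (by linarith : x + ε ≤ x + ε₀) (by linarith : y - ε₀ ≤ y - ε)
        (by linarith : y - ε ≤ y + ε) (by linarith : y + ε ≤ y + ε₀) hgap
      have hNN : NN ξ (x - ε₀) (x + ε₀) (y - ε₀) (y + ε₀) = mult ξ (x, y) := by
        rw [hmult, hval]; rfl
      linarith [this, hNN.ge]
    have hlbε : mult ξ (x, y) ≤ NN ξ (x - ε) (x + ε) (y - ε) (y + ε) := by
      rw [hmult]
      exact csInf_le hbdd (hmem ε h1 (by linarith))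
    linarith

lemma mult_nonneg {ξ : M → ℝ} (hξ : Continuous ξ) {q : ℝ × ℝ} (h : q.1 < q.2) :
    0 ≤ mult ξ q := by
  have := (mult_spec hξ h).1
  rwa [Prod.mk.eta] at this

end LCM
namespace LCM

variable {M : Type*} [TopologicalSpace M] [CompactSpace M] [LocallyConnectedSpace M]
  [Nonempty M]

lemma NN_le_NN {ξ ζ : M → ℝ} (hξ : Continuous ξ) (hζ : Continuous ζ)
    {η a a' b b' a₁ a₂ b₁ b₂ : ℝ} (hd : ∀ Q, |ξ Q - ζ Q| ≤ η)
    (h1 : a₁ + η ≤ a) (h2 : a ≤ a') (h3 : a' + η ≤ a₂) (h4 : b₁ + η ≤ b) (h5 : b ≤ b')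
    (h6 : b' + η ≤ b₂) (h7 : a₂ + η < b) (h8 : a₂ < b₁) :
    NN ζ a a' b b' ≤ NN ξ a₁ a₂ b₁ b₂ := by
  have hη : 0 ≤ η := le_trans (abs_nonneg _) (hd (Classical.arbitrary M))
  have hdx : ∀ Q, ζ Q ≤ ξ Q + η := fun Q => by
    have := abs_le.1 (hd Q); linarith [this.1]
  have hdy : ∀ Q, ξ Q ≤ ζ Q + η := fun Q => by
    have := abs_le.1 (hd Q); linarith [this.2]
  -- inclusions
  have i1 : sub ξ a₁ ⊆ sub ζ a := fun Q hQ => by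
    have := hdx Q; simp only [sub, Set.mem_setOf_eq] at *; linarith
  have i2 : sub ζ a' ⊆ sub ξ a₂ := fun Q hQ => by
    have := hdy Q; simp only [sub, Set.mem_setOf_eq] at *; linarith
  have i3 : sub ξ a₂ ⊆ sub ζ b := fun Q hQ => by
    have := hdx Q; simp only [sub, Set.mem_setOf_eq] at *; linarith
  have i3' : sub ξ a₂ ⊆ sub ζ b' := fun Q hQ => by
    have := hdx Q; simp only [sub, Set.mem_setOf_eq] at *; linarith
  have i4 : sub ζ b ⊆ sub ζ b' := sub_mono h5
  have i5 : sub ζ a ⊆ sub ζ b := sub_mono (by linarith)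
  have i6 : sub ξ a₂ ⊆ sub ξ b₁ := sub_mono h8.le
  have i7 : sub ξ b₁ ⊆ sub ζ b := fun Q hQ => by
    have := hdx Q; simp only [sub, Set.mem_setOf_eq] at *; linarith
  have i8 : sub ζ b' ⊆ sub ξ b₂ := fun Q hQ => by
    have := hdy Q; simp only [sub, Set.mem_setOf_eq] at *; linarith
  have i9 : sub ζ a ⊆ sub ζ a' := sub_mono h2
  have i10 : sub ξ a₁ ⊆ sub ξ a₂ := sub_mono (by linarith)
  -- finiteness
  have f2 : (comps (sub ξ a₂) (sub ζ b)).Finite :=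
    comps_sub_finite hξ (fun Q hQ => by
      have := hdx Q; simp only [sub, Set.mem_setOf_eq] at *; linarith) hζ
  have f3 : (comps (sub ζ a) (sub ζ b)).Finite :=
    comps_sub_finite hζ (fun Q hQ => by
      simp only [sub, Set.mem_setOf_eq] at *; linarith) hζ
  have f4 : (comps (sub ξ a₂) (sub ξ b₁)).Finite :=
    comps_sub_finite hξ (fun Q hQ => by
      simp only [sub, Set.mem_setOf_eq] at *; linarith) hξ
  have f5 : (comps (sub ξ a₂) (sub ζ b')).Finite :=
    comps_sub_finite hξ (fun Q hQ => by
      have := hdx Q; simp only [sub, Set.mem_setOf_eq] at *; linarith) hζ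
  have K1 := key4 i1 i5 i4 f3
  have K2 := key4 i2 i3 i4 f2
  have K3 := key4 i10 i6 i7 f4
  have K4 := key4 i10 i3' i8 f5
  simp only [NN, rsf_eq']
  omega

end LCM
namespace LCM

variable {M : Type*} [TopologicalSpace M] [CompactSpace M] [LocallyConnectedSpace M]

structure Rect where
  a : ℝ
  a' : ℝ
  b : ℝ
  b' : ℝ

noncomputable def step (ξ : M → ℝ) (r : Rect) : Rect :=
  let mx := (r.a + r.a') / 2
  let my := (r.b + r.b') / 2
  if 1 ≤ NN ξ r.a mx r.b my then ⟨r.a, mx, r.b, my⟩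
  else if 1 ≤ NN ξ mx r.a' r.b my then ⟨mx, r.a', r.b, my⟩
  else if 1 ≤ NN ξ r.a mx my r.b' then ⟨r.a, mx, my, r.b'⟩
  else ⟨mx, r.a', my, r.b'⟩

lemma step_spec {ξ : M → ℝ} (hξ : Continuous ξ) (r : Rect)
    (h1 : r.a ≤ r.a') (h2 : r.b ≤ r.b') (h3 : r.a' < r.b)
    (h4 : 1 ≤ NN ξ r.a r.a' r.b r.b') :
    r.a ≤ (step ξ r).a ∧ (step ξ r).a ≤ (step ξ r).a' ∧ (step ξ r).a' ≤ r.a' ∧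
    r.b ≤ (step ξ r).b ∧ (step ξ r).b ≤ (step ξ r).b' ∧ (step ξ r).b' ≤ r.b' ∧
    (step ξ r).a' - (step ξ r).a = (r.a' - r.a) / 2 ∧
    (step ξ r).b' - (step ξ r).b = (r.b' - r.b) / 2 ∧
    1 ≤ NN ξ (step ξ r).a (step ξ r).a' (step ξ r).b (step ξ r).b' := by
  set mx := (r.a + r.a') / 2 with hmx
  set my := (r.b + r.b') / 2 with hmy
  have hax : r.a ≤ mx := by rw [hmx]; linarith
  have hxa : mx ≤ r.a' := by rw [hmx]; linarith
  have hby : r.b ≤ my := by rw [hmy]; linarith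
  have hyb : my ≤ r.b' := by rw [hmy]; linarith
  have hsum : NN ξ r.a r.a' r.b r.b' =
      NN ξ r.a mx r.b my + NN ξ mx r.a' r.b my + NN ξ r.a mx my r.b' +
        NN ξ mx r.a' my r.b' := by
    simp only [NN]; ring
  have n1 : 0 ≤ NN ξ r.a mx r.b my := NN_nonneg hξ hax (lt_of_le_of_lt hxa h3) hby
  have n2 : 0 ≤ NN ξ mx r.a' r.b my := NN_nonneg hξ hxa h3 hby
  have n3 : 0 ≤ NN ξ r.a mx my r.b' := NN_nonneg hξ hax (lt_of_le_of_lt hxa (h3.trans_le hby)) hyb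
  have n4 : 0 ≤ NN ξ mx r.a' my r.b' := NN_nonneg hξ hxa (h3.trans_le hby) hyb
  unfold step
  rw [← hmx, ← hmy]
  by_cases c1 : 1 ≤ NN ξ r.a mx r.b my
  · rw [if_pos c1]
    refine ⟨le_refl _, hax, hxa, le_refl _, hby, hyb, by rw [hmx]; ring, by rw [hmy]; ring, c1⟩
  · rw [if_neg c1]
    by_cases c2 : 1 ≤ NN ξ mx r.a' r.b my
    · rw [if_pos c2]
      refine ⟨hax, hxa, le_refl _, le_refl _, hby, hyb, by rw [hmx]; ring, by rw [hmy]; ring, c2⟩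
    · rw [if_neg c2]
      by_cases c3 : 1 ≤ NN ξ r.a mx my r.b'
      · rw [if_pos c3]
        refine ⟨le_refl _, hax, hxa, hby, hyb, le_refl _, by rw [hmx]; ring, by rw [hmy]; ring, c3⟩
      · rw [if_neg c3]
        refine ⟨hax, hxa, le_refl _, hby, hyb, le_refl _, by rw [hmx]; ring, by rw [hmy]; ring, ?_⟩
        show 1 ≤ NN ξ mx r.a' my r.b'
        omega
noncomputable def seqR (ξ : M → ℝ) (r0 : Rect) : ℕ → Rect
  | 0 => r0
  | n + 1 => step ξ (seqR ξ r0 n)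

lemma NN_eq_zero {ξ : M → ℝ} (hξ : Continuous ξ) {a a' b b' : ℝ}
    (ha : a ≤ a') (hb : b ≤ b') (hab : a' < b)
    (h : ∀ q : ℝ × ℝ, a ≤ q.1 → q.1 ≤ a' → b ≤ q.2 → q.2 ≤ b' → mult ξ q = 0) :
    NN ξ a a' b b' = 0 := by
  by_contra hne
  have hpos : 1 ≤ NN ξ a a' b b' := by
    have := NN_nonneg hξ ha hab hb; omega
  set S : ℕ → Rect := seqR ξ ⟨a, a', b, b'⟩ with hS
  have hS0 : S 0 = ⟨a, a', b, b'⟩ := rfl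
  -- invariant
  have inv : ∀ n, a ≤ (S n).a ∧ (S n).a ≤ (S n).a' ∧ (S n).a' ≤ a' ∧
      b ≤ (S n).b ∧ (S n).b ≤ (S n).b' ∧ (S n).b' ≤ b' ∧
      (S n).a' - (S n).a = (a' - a) / 2 ^ n ∧ (S n).b' - (S n).b = (b' - b) / 2 ^ n ∧
      1 ≤ NN ξ (S n).a (S n).a' (S n).b (S n).b' := by
    intro n
    induction n with
    | zero =>
      refine ⟨le_refl _, ha, le_refl _, le_refl _, hb, le_refl _, ?_, ?_, hpos⟩
      · rw [hS0]; norm_num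
      · rw [hS0]; norm_num
    | succ n ih =>
      obtain ⟨j1, j2, j3, j4, j5, j6, j7, j8, j9⟩ := ih
      have hab' : (S n).a' < (S n).b := lt_of_le_of_lt j3 (lt_of_lt_of_le hab j4)
      obtain ⟨k1, k2, k3, k4, k5, k6, k7, k8, k9⟩ := step_spec hξ (S n) j2 j5 hab' j9
      have hstep : S (n + 1) = step ξ (S n) := rfl
      rw [hstep]
      refine ⟨j1.trans k1, k2, k3.trans j3, j4.trans k4, k5, k6.trans j6, ?_, ?_, k9⟩
      · rw [k7, j7]; ring
      · rw [k8, j8]; ring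
  have hmonoa : Monotone fun n => (S n).a := by
    apply monotone_nat_of_le_succ
    intro n
    obtain ⟨j1, j2, j3, j4, j5, j6, j7, j8, j9⟩ := inv n
    exact (step_spec hξ (S n) j2 j5 (lt_of_le_of_lt j3 (lt_of_lt_of_le hab j4)) j9).1
  have hmonob : Monotone fun n => (S n).b := by
    apply monotone_nat_of_le_succ
    intro n
    obtain ⟨j1, j2, j3, j4, j5, j6, j7, j8, j9⟩ := inv n
    exact (step_spec hξ (S n) j2 j5 (lt_of_le_of_lt j3 (lt_of_lt_of_le hab j4)) j9).2.2.2.1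
  have hantia : ∀ m n : ℕ, m ≤ n → (S n).a' ≤ (S m).a' := by
    intro m n hmn
    induction n with
    | zero => simp_all
    | succ n ih =>
      rcases Nat.eq_or_lt_of_le hmn with rfl | hlt
      · exact le_refl _
      · have hmn' : m ≤ n := Nat.lt_succ_iff.mp hlt
        obtain ⟨j1, j2, j3, j4, j5, j6, j7, j8, j9⟩ := inv n
        exact le_trans
          ((step_spec hξ (S n) j2 j5 (lt_of_le_of_lt j3 (lt_of_lt_of_le hab j4)) j9).2.2.1)
          (ih hmn')
  have hantib : ∀ m n : ℕ, m ≤ n → (S n).b' ≤ (S m).b' := by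
    intro m n hmn
    induction n with
    | zero => simp_all
    | succ n ih =>
      rcases Nat.eq_or_lt_of_le hmn with rfl | hlt
      · exact le_refl _
      · have hmn' : m ≤ n := Nat.lt_succ_iff.mp hlt
        obtain ⟨j1, j2, j3, j4, j5, j6, j7, j8, j9⟩ := inv n
        exact le_trans
          ((step_spec hξ (S n) j2 j5 (lt_of_le_of_lt j3 (lt_of_lt_of_le hab j4)) j9).2.2.2.2.2.1)
          (ih hmn')
  have hchaina : ∀ m n : ℕ, (S m).a ≤ (S n).a' := by
    intro m n
    rcases le_total m n with hmn | hnm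
    · exact le_trans (hmonoa hmn) (inv n).2.1
    · exact le_trans (inv m).2.1 (hantia n m hnm)
  have hchainb : ∀ m n : ℕ, (S m).b ≤ (S n).b' := by
    intro m n
    rcases le_total m n with hmn | hnm
    · exact le_trans (hmonob hmn) (inv n).2.2.2.2.1
    · exact le_trans (inv m).2.2.2.2.1 (hantib n m hnm)
  have hbda : BddAbove (Set.range fun n => (S n).a) := ⟨a', by
    rintro _ ⟨n, rfl⟩; exact (inv n).2.1.trans (inv n).2.2.1⟩
  have hbdb : BddAbove (Set.range fun n => (S n).b) := ⟨b', by
    rintro _ ⟨n, rfl⟩; exact (inv n).2.2.2.2.1.trans (inv n).2.2.2.2.2.1⟩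
  set q1 := ⨆ n, (S n).a with hq1
  set q2 := ⨆ n, (S n).b with hq2
  have hq1le : ∀ n, (S n).a ≤ q1 := fun n => le_ciSup hbda n
  have hq2le : ∀ n, (S n).b ≤ q2 := fun n => le_ciSup hbdb n
  have hq1ub : ∀ n, q1 ≤ (S n).a' := fun n => ciSup_le fun m => hchaina m n
  have hq2ub : ∀ n, q2 ≤ (S n).b' := fun n => ciSup_le fun m => hchainb m n
  have hq1a : a ≤ q1 := le_trans (by rw [hS0] : a ≤ (S 0).a) (hq1le 0)
  have hq1a' : q1 ≤ a' := le_trans (hq1ub 0) (by rw [hS0])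
  have hq2b : b ≤ q2 := le_trans (by rw [hS0] : b ≤ (S 0).b) (hq2le 0)
  have hq2b' : q2 ≤ b' := le_trans (hq2ub 0) (by rw [hS0])
  have hq12 : q1 < q2 := lt_of_le_of_lt hq1a' (lt_of_lt_of_le hab hq2b)
  obtain ⟨-, ε₀, hε₀, hgap, hval⟩ := mult_spec hξ hq12
  have hm0 : mult ξ (q1, q2) = 0 := h (q1, q2) hq1a hq1a' hq2b hq2b'
  -- pick n with widths < ε₀
  obtain ⟨n, hn⟩ := pow_unbounded_of_one_lt (max ((a' - a) / ε₀) ((b' - b) / ε₀)) one_lt_two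
  have h2n : (0:ℝ) < 2 ^ n := by positivity
  have hwa : (a' - a) / 2 ^ n < ε₀ := by
    rw [div_lt_iff₀ h2n]
    have h1 : (a' - a) / ε₀ < 2 ^ n := lt_of_le_of_lt (le_max_left _ _) hn
    rw [div_lt_iff₀ hε₀] at h1
    linarith
  have hwb : (b' - b) / 2 ^ n < ε₀ := by
    rw [div_lt_iff₀ h2n]
    have h1 : (b' - b) / ε₀ < 2 ^ n := lt_of_le_of_lt (le_max_right _ _) hn
    rw [div_lt_iff₀ hε₀] at h1
    linarith
  obtain ⟨j1, j2, j3, j4, j5, j6, j7, j8, j9⟩ := inv n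
  have hNN0 : NN ξ (q1 - ε₀) (q1 + ε₀) (q2 - ε₀) (q2 + ε₀) = 0 := by
    rw [hval ε₀ hε₀ (le_refl _), hm0]
  have hmono := NN_mono hξ
    (by linarith [hq1ub n, j7] : q1 - ε₀ ≤ (S n).a)
    j2 (by linarith [hq1le n, j7] : (S n).a' ≤ q1 + ε₀)
    (by linarith [hq2ub n, j8] : q2 - ε₀ ≤ (S n).b)
    j5 (by linarith [hq2le n, j8] : (S n).b' ≤ q2 + ε₀)
    hgap
  rw [hNN0] at hmono
  omega

end LCM
namespace LCM

variable {M : Type*} [TopologicalSpace M] [CompactSpace M] [LocallyConnectedSpace M]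

lemma pick_rho {ξ : M → ℝ} (hξ : Continuous ξ) {c : ℝ × ℝ} {F' : Finset (ℝ × ℝ)}
    (hcF' : c ∉ F') {a a' b b' : ℝ}
    (hca : a < c.1) (hca' : c.1 < a') (hcb : b < c.2) (hcb' : c.2 < b') (hab : a' < b) :
    ∃ ρ : ℝ, 0 < ρ ∧ a < c.1 - ρ ∧ c.1 + ρ < a' ∧ b < c.2 - ρ ∧ c.2 + ρ < b' ∧
      (∀ q ∈ F', ρ < max |q.1 - c.1| |q.2 - c.2|) ∧
      (∀ q ∈ F', |q.1 - c.1| ≠ ρ) ∧ (∀ q ∈ F', |q.2 - c.2| ≠ ρ) ∧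
      NN ξ (c.1 - ρ) (c.1 + ρ) (c.2 - ρ) (c.2 + ρ) = mult ξ c := by
  classical
  have hc12 : c.1 < c.2 := lt_trans hca' (lt_trans hab hcb)
  set m0 : ℝ := min (min (c.1 - a) (a' - c.1)) (min (c.2 - b) (b' - c.2)) with hm0def
  have hm0 : 0 < m0 := by
    apply lt_min (lt_min (by linarith) (by linarith)) (lt_min (by linarith) (by linarith))
  have hmaxpos : ∀ q ∈ F', 0 < max |q.1 - c.1| |q.2 - c.2| := by
    intro q hq
    have hne : q ≠ c := fun h => hcF' (h ▸ hq)
    rcases Prod.ext_iff.not.mp hne |> not_and_or.mp with h | h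
    · exact lt_max_of_lt_left (abs_pos.mpr (sub_ne_zero.mpr h))
    · exact lt_max_of_lt_right (abs_pos.mpr (sub_ne_zero.mpr h))
  have hex : ∃ r₀ : ℝ, 0 < r₀ ∧ r₀ ≤ m0 ∧
      ∀ q ∈ F', r₀ ≤ max |q.1 - c.1| |q.2 - c.2| := by
    by_cases hF' : F'.Nonempty
    · refine ⟨min m0 (F'.inf' hF' fun q => max |q.1 - c.1| |q.2 - c.2|),
        lt_min hm0 ((Finset.lt_inf'_iff hF').mpr hmaxpos), min_le_left _ _, fun q hq => ?_⟩
      exact le_trans (min_le_right _ _) (Finset.inf'_le _ hq)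
    · exact ⟨m0, hm0, le_refl _, fun q hq => absurd ⟨q, hq⟩ hF'⟩
  obtain ⟨r₀, hr₀, hr₀m0, hr₀far⟩ := hex
  obtain ⟨-, ε₀, hε₀, hgap, hval⟩ := mult_spec hξ hc12
  set r₁ : ℝ := min r₀ ε₀ with hr₁def
  have hr₁ : 0 < r₁ := lt_min hr₀ hε₀
  set G : Finset ℝ := F'.image (fun q => |q.1 - c.1|) ∪ F'.image (fun q => |q.2 - c.2|)
    with hGdef
  have hinf : (Set.Ioo (0:ℝ) r₁ \ ↑G).Infinite :=
    (Set.Ioo_infinite hr₁).diff (G.finite_toSet)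
  obtain ⟨ρ, hρ⟩ := hinf.nonempty
  obtain ⟨⟨hρ0, hρr₁⟩, hρG⟩ := hρ
  have hρr₀ : ρ < r₀ := lt_of_lt_of_le hρr₁ (min_le_left _ _)
  have hρε₀ : ρ ≤ ε₀ := le_of_lt (lt_of_lt_of_le hρr₁ (min_le_right _ _))
  have hρm0 : ρ < m0 := lt_of_lt_of_le hρr₀ hr₀m0
  have hb1 : ρ < c.1 - a := lt_of_lt_of_le hρm0 ((min_le_left _ _).trans (min_le_left _ _))
  have hb2 : ρ < a' - c.1 := lt_of_lt_of_le hρm0 ((min_le_left _ _).trans (min_le_right _ _))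
  have hb3 : ρ < c.2 - b := lt_of_lt_of_le hρm0 ((min_le_right _ _).trans (min_le_left _ _))
  have hb4 : ρ < b' - c.2 := lt_of_lt_of_le hρm0 ((min_le_right _ _).trans (min_le_right _ _))
  refine ⟨ρ, hρ0, by linarith, by linarith, by linarith, by linarith,
    fun q hq => lt_of_lt_of_le hρr₀ (hr₀far q hq), ?_, ?_, ?_⟩
  · intro q hq heq
    exact hρG (Finset.mem_union_left _ (Finset.mem_image.mpr ⟨q, hq, heq⟩))
  · intro q hq heq
    exact hρG (Finset.mem_union_right _ (Finset.mem_image.mpr ⟨q, hq, heq⟩))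
  · have := hval ρ hρ0 hρε₀
    rwa [Prod.mk.eta] at this

end LCM
namespace LCM

variable {M : Type*} [TopologicalSpace M] [CompactSpace M] [LocallyConnectedSpace M]

lemma sum_mult_le {ξ : M → ℝ} (hξ : Continuous ξ) :
    ∀ n : ℕ, ∀ F : Finset (ℝ × ℝ), ∀ a a' b b' : ℝ, F.card = n →
      a ≤ a' → b ≤ b' → a' < b →
      (∀ q ∈ F, a < q.1 ∧ q.1 < a' ∧ b < q.2 ∧ q.2 < b' ∧ 0 < mult ξ q) →
      (∑ q ∈ F, mult ξ q) ≤ NN ξ a a' b b' := by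
  classical
  intro n
  induction n using Nat.strong_induction_on with
  | _ n IH =>
    intro F a a' b b' hcard ha hb hab hF
    rcases Finset.eq_empty_or_nonempty F with rfl | ⟨c, hc⟩
    · simpa using NN_nonneg hξ ha hab hb
    obtain ⟨hca, hca', hcb, hcb', hmc⟩ := hF c hc
    set F' := F.erase c with hF'def
    have hcF' : c ∉ F' := Finset.notMem_erase c F
    obtain ⟨ρ, hρ0, e1, e2, e3, e4, hfar, hav1, hav2, hctr⟩ :=
      pick_rho hξ hcF' hca hca' hcb hcb' hab
    set s := c.1 - ρ with hs
    set s' := c.1 + ρ with hs'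
    set t := c.2 - ρ with ht
    set t' := c.2 + ρ with ht'
    have hlt : ∀ X : Finset (ℝ × ℝ), X ⊆ F' → X.card < n := by
      intro X hX
      have h1 : X.card ≤ F'.card := Finset.card_le_card hX
      have h2 : F'.card = n - 1 := by rw [hF'def, Finset.card_erase_of_mem hc, hcard]
      have h3 : 0 < n := hcard ▸ Finset.card_pos.mpr ⟨c, hc⟩
      omega
    set FL := F'.filter (fun q => q.1 ≤ s) with hFL
    set Fr := F'.filter (fun q => ¬ q.1 ≤ s) with hFr
    set FM := Fr.filter (fun q => q.1 ≤ s') with hFM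
    set FR := Fr.filter (fun q => ¬ q.1 ≤ s') with hFRd
    set FB := FM.filter (fun q => q.2 ≤ t) with hFB
    set FM2 := FM.filter (fun q => ¬ q.2 ≤ t) with hFM2
    set FC := FM2.filter (fun q => q.2 ≤ t') with hFC
    set FT := FM2.filter (fun q => ¬ q.2 ≤ t') with hFT
    have subFr : Fr ⊆ F' := Finset.filter_subset _ _
    have subFL : FL ⊆ F' := Finset.filter_subset _ _
    have subFM : FM ⊆ F' := (Finset.filter_subset _ _).trans subFr
    have subFR : FR ⊆ F' := (Finset.filter_subset _ _).trans subFr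
    have subFB : FB ⊆ F' := (Finset.filter_subset _ _).trans subFM
    have subFM2 : FM2 ⊆ F' := (Finset.filter_subset _ _).trans subFM
    have subFT : FT ⊆ F' := (Finset.filter_subset _ _).trans subFM2
    -- the central cell contains no other point of F
    have hFCempty : FC = ∅ := by
      rw [Finset.eq_empty_iff_forall_notMem]
      intro q hq
      simp only [hFC, hFM2, hFM, hFr, Finset.mem_filter] at hq
      obtain ⟨⟨⟨⟨hqF', h1⟩, h2⟩, h3⟩, h4⟩ := hq
      have habs1 : |q.1 - c.1| ≤ ρ := by
        rw [abs_le]; rw [not_le] at h1; constructor <;> [linarith [hs ▸ h1]; linarith [hs' ▸ h2]]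
      have habs2 : |q.2 - c.2| ≤ ρ := by
        rw [abs_le]; rw [not_le] at h3; constructor <;> [linarith [ht ▸ h3]; linarith [ht' ▸ h4]]
      have hmax := max_le habs1 habs2
      linarith [hfar q hqF']
    -- sums
    have hsum0 : mult ξ c + ∑ q ∈ F', mult ξ q = ∑ q ∈ F, mult ξ q :=
      Finset.add_sum_erase F _ hc
    have hs1 : (∑ q ∈ FL, mult ξ q) + ∑ q ∈ Fr, mult ξ q = ∑ q ∈ F', mult ξ q :=
      Finset.sum_filter_add_sum_filter_not F' _ _
    have hs2 : (∑ q ∈ FM, mult ξ q) + ∑ q ∈ FR, mult ξ q = ∑ q ∈ Fr, mult ξ q :=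
      Finset.sum_filter_add_sum_filter_not Fr _ _
    have hs3 : (∑ q ∈ FB, mult ξ q) + ∑ q ∈ FM2, mult ξ q = ∑ q ∈ FM, mult ξ q :=
      Finset.sum_filter_add_sum_filter_not FM _ _
    have hs4 : (∑ q ∈ FC, mult ξ q) + ∑ q ∈ FT, mult ξ q = ∑ q ∈ FM2, mult ξ q :=
      Finset.sum_filter_add_sum_filter_not FM2 _ _
    have hsC : (∑ q ∈ FC, mult ξ q) = 0 := by rw [hFCempty]; simp
    -- region estimates
    have hL : (∑ q ∈ FL, mult ξ q) ≤ NN ξ a s b b' := by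
      apply IH FL.card (hlt FL subFL) FL a s b b' rfl (by linarith) hb (by linarith)
      intro q hq
      simp only [hFL, Finset.mem_filter] at hq
      obtain ⟨hqF', hqs⟩ := hq
      obtain ⟨g1, g2, g3, g4, g5⟩ := hF q (Finset.mem_of_mem_erase hqF')
      refine ⟨g1, lt_of_le_of_ne hqs ?_, g3, g4, g5⟩
      intro heq
      apply hav1 q hqF'
      rw [heq, hs, show c.1 - ρ - c.1 = -ρ by ring, abs_neg, abs_of_pos hρ0]
    have hR : (∑ q ∈ FR, mult ξ q) ≤ NN ξ s' a' b b' := by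
      apply IH FR.card (hlt FR subFR) FR s' a' b b' rfl (by linarith) hb hab
      intro q hq
      simp only [hFRd, hFr, Finset.mem_filter] at hq
      obtain ⟨⟨hqF', h1⟩, h2⟩ := hq
      obtain ⟨g1, g2, g3, g4, g5⟩ := hF q (Finset.mem_of_mem_erase hqF')
      exact ⟨not_le.mp h2, g2, g3, g4, g5⟩
    have hB : (∑ q ∈ FB, mult ξ q) ≤ NN ξ s s' b t := by
      apply IH FB.card (hlt FB subFB) FB s s' b t rfl (by linarith) (by linarith)
        (by linarith)
      intro q hq
      simp only [hFB, hFM, hFr, Finset.mem_filter] at hq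
      obtain ⟨⟨⟨hqF', h1⟩, h2⟩, h3⟩ := hq
      obtain ⟨g1, g2, g3, g4, g5⟩ := hF q (Finset.mem_of_mem_erase hqF')
      refine ⟨not_le.mp h1, lt_of_le_of_ne h2 ?_, g3, lt_of_le_of_ne h3 ?_, g5⟩
      · intro heq
        apply hav1 q hqF'
        rw [heq, hs', show c.1 + ρ - c.1 = ρ by ring, abs_of_pos hρ0]
      · intro heq
        apply hav2 q hqF'
        rw [heq, ht, show c.2 - ρ - c.2 = -ρ by ring, abs_neg, abs_of_pos hρ0]
    have hT : (∑ q ∈ FT, mult ξ q) ≤ NN ξ s s' t' b' := by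
      apply IH FT.card (hlt FT subFT) FT s s' t' b' rfl (by linarith) (by linarith)
        (by linarith)
      intro q hq
      simp only [hFT, hFM2, hFM, hFr, Finset.mem_filter] at hq
      obtain ⟨⟨⟨⟨hqF', h1⟩, h2⟩, h3⟩, h4⟩ := hq
      obtain ⟨g1, g2, g3, g4, g5⟩ := hF q (Finset.mem_of_mem_erase hqF')
      refine ⟨not_le.mp h1, lt_of_le_of_ne h2 ?_, not_le.mp h4, g4, g5⟩
      intro heq
      apply hav1 q hqF'
      rw [heq, hs', show c.1 + ρ - c.1 = ρ by ring, abs_of_pos hρ0]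
    -- decomposition of NN
    have hd1 : NN ξ a a' b b' = NN ξ a s b b' + NN ξ s a' b b' := NN_split_x ξ a s a' b b'
    have hd2 : NN ξ s a' b b' = NN ξ s s' b b' + NN ξ s' a' b b' := NN_split_x ξ s s' a' b b'
    have hd3 : NN ξ s s' b b' = NN ξ s s' b t + NN ξ s s' t b' := NN_split_y ξ s s' b t b'
    have hd4 : NN ξ s s' t b' = NN ξ s s' t t' + NN ξ s s' t' b' := NN_split_y ξ s s' t t' b'
    linarith [hctr]

end LCM
namespace LCM

variable {M : Type*} [TopologicalSpace M] [CompactSpace M] [LocallyConnectedSpace M]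

lemma sum_mult_eq {ξ : M → ℝ} (hξ : Continuous ξ) :
    ∀ n : ℕ, ∀ T : Finset (ℝ × ℝ), ∀ a a' b b' : ℝ, T.card = n →
      a ≤ a' → b ≤ b' → a' < b →
      (∀ q : ℝ × ℝ, q ∈ T ↔ (a ≤ q.1 ∧ q.1 ≤ a' ∧ b ≤ q.2 ∧ q.2 ≤ b' ∧ mult ξ q ≠ 0)) →
      (∀ q ∈ T, a < q.1 ∧ q.1 < a' ∧ b < q.2 ∧ q.2 < b') →
      NN ξ a a' b b' = ∑ q ∈ T, mult ξ q := by
  classical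
  intro n
  induction n using Nat.strong_induction_on with
  | _ n IH =>
    intro T a a' b b' hcard ha hb hab hchar hT
    rcases Finset.eq_empty_or_nonempty T with rfl | ⟨c, hc⟩
    · simp only [Finset.sum_empty]
      apply NN_eq_zero hξ ha hb hab
      intro q h1 h2 h3 h4
      by_contra hm
      have := (hchar q).mpr ⟨h1, h2, h3, h4, hm⟩
      simp at this
    obtain ⟨hca, hca', hcb, hcb'⟩ := hT c hc
    have hmc : mult ξ c ≠ 0 := ((hchar c).mp hc).2.2.2.2
    set T' := T.erase c with hT'def
    have hcT' : c ∉ T' := Finset.notMem_erase c T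
    obtain ⟨ρ, hρ0, e1, e2, e3, e4, hfar, hav1, hav2, hctr⟩ :=
      pick_rho hξ hcT' hca hca' hcb hcb' hab
    set s := c.1 - ρ with hs
    set s' := c.1 + ρ with hs'
    set t := c.2 - ρ with ht
    set t' := c.2 + ρ with ht'
    have hlt : ∀ X : Finset (ℝ × ℝ), X ⊆ T' → X.card < n := by
      intro X hX
      have h1 : X.card ≤ T'.card := Finset.card_le_card hX
      have h2 : T'.card = n - 1 := by rw [hT'def, Finset.card_erase_of_mem hc, hcard]
      have h3 : 0 < n := hcard ▸ Finset.card_pos.mpr ⟨c, hc⟩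
      omega
    set FL := T'.filter (fun q => q.1 ≤ s) with hFL
    set Fr := T'.filter (fun q => ¬ q.1 ≤ s) with hFr
    set FM := Fr.filter (fun q => q.1 ≤ s') with hFM
    set FR := Fr.filter (fun q => ¬ q.1 ≤ s') with hFRd
    set FB := FM.filter (fun q => q.2 ≤ t) with hFB
    set FM2 := FM.filter (fun q => ¬ q.2 ≤ t) with hFM2
    set FC := FM2.filter (fun q => q.2 ≤ t') with hFC
    set FT := FM2.filter (fun q => ¬ q.2 ≤ t') with hFT
    have subFr : Fr ⊆ T' := Finset.filter_subset _ _
    have subFL : FL ⊆ T' := Finset.filter_subset _ _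
    have subFM : FM ⊆ T' := (Finset.filter_subset _ _).trans subFr
    have subFR : FR ⊆ T' := (Finset.filter_subset _ _).trans subFr
    have subFB : FB ⊆ T' := (Finset.filter_subset _ _).trans subFM
    have subFM2 : FM2 ⊆ T' := (Finset.filter_subset _ _).trans subFM
    have subFT : FT ⊆ T' := (Finset.filter_subset _ _).trans subFM2
    have hmemT : ∀ q ∈ T', q ∈ T := fun q hq => Finset.mem_of_mem_erase hq
    -- avoidance restatements
    have hne1s : ∀ q ∈ T', q.1 ≠ s := by
      intro q hq heq
      apply hav1 q hq
      rw [heq, hs, show c.1 - ρ - c.1 = -ρ by ring, abs_neg, abs_of_pos hρ0]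
    have hne1s' : ∀ q ∈ T', q.1 ≠ s' := by
      intro q hq heq
      apply hav1 q hq
      rw [heq, hs', show c.1 + ρ - c.1 = ρ by ring, abs_of_pos hρ0]
    have hne2t : ∀ q ∈ T', q.2 ≠ t := by
      intro q hq heq
      apply hav2 q hq
      rw [heq, ht, show c.2 - ρ - c.2 = -ρ by ring, abs_neg, abs_of_pos hρ0]
    have hne2t' : ∀ q ∈ T', q.2 ≠ t' := by
      intro q hq heq
      apply hav2 q hq
      rw [heq, ht', show c.2 + ρ - c.2 = ρ by ring, abs_of_pos hρ0]
    have hFCempty : FC = ∅ := by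
      rw [Finset.eq_empty_iff_forall_notMem]
      intro q hq
      simp only [hFC, hFM2, hFM, hFr, Finset.mem_filter] at hq
      obtain ⟨⟨⟨⟨hqF', h1⟩, h2⟩, h3⟩, h4⟩ := hq
      have habs1 : |q.1 - c.1| ≤ ρ := by
        rw [abs_le]; rw [not_le] at h1; constructor <;> [linarith [hs ▸ h1]; linarith [hs' ▸ h2]]
      have habs2 : |q.2 - c.2| ≤ ρ := by
        rw [abs_le]; rw [not_le] at h3; constructor <;> [linarith [ht ▸ h3]; linarith [ht' ▸ h4]]
      have hmax := max_le habs1 habs2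
      linarith [hfar q hqF']
    have hsum0 : mult ξ c + ∑ q ∈ T', mult ξ q = ∑ q ∈ T, mult ξ q :=
      Finset.add_sum_erase T _ hc
    have hs1 : (∑ q ∈ FL, mult ξ q) + ∑ q ∈ Fr, mult ξ q = ∑ q ∈ T', mult ξ q :=
      Finset.sum_filter_add_sum_filter_not T' _ _
    have hs2 : (∑ q ∈ FM, mult ξ q) + ∑ q ∈ FR, mult ξ q = ∑ q ∈ Fr, mult ξ q :=
      Finset.sum_filter_add_sum_filter_not Fr _ _
    have hs3 : (∑ q ∈ FB, mult ξ q) + ∑ q ∈ FM2, mult ξ q = ∑ q ∈ FM, mult ξ q :=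
      Finset.sum_filter_add_sum_filter_not FM _ _
    have hs4 : (∑ q ∈ FC, mult ξ q) + ∑ q ∈ FT, mult ξ q = ∑ q ∈ FM2, mult ξ q :=
      Finset.sum_filter_add_sum_filter_not FM2 _ _
    have hsC : (∑ q ∈ FC, mult ξ q) = 0 := by rw [hFCempty]; simp
    -- region L
    have hL : NN ξ a s b b' = ∑ q ∈ FL, mult ξ q := by
      apply IH FL.card (hlt FL subFL) FL a s b b' rfl (by linarith) hb (by linarith)
      · intro q
        constructor
        · intro hq
          have hq' := (Finset.mem_filter.mp (hFL ▸ hq))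
          obtain ⟨g1, g2, g3, g4, g5⟩ := (hchar q).mp (hmemT q hq'.1)
          exact ⟨g1, hq'.2, g3, g4, g5⟩
        · rintro ⟨g1, g2, g3, g4, g5⟩
          have hqT : q ∈ T := (hchar q).mpr ⟨g1, by linarith, g3, g4, g5⟩
          have hqne : q ≠ c := by
            intro h
            rw [h] at g2
            have : s < c.1 := by rw [hs]; linarith
            linarith
          rw [hFL]
          exact Finset.mem_filter.mpr ⟨Finset.mem_erase.mpr ⟨hqne, hqT⟩, g2⟩
      · intro q hq
        have hq' := (Finset.mem_filter.mp (hFL ▸ hq))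
        obtain ⟨g1, g2, g3, g4⟩ := hT q (hmemT q hq'.1)
        exact ⟨g1, lt_of_le_of_ne hq'.2 (hne1s q hq'.1), g3, g4⟩
    -- region R
    have hR : NN ξ s' a' b b' = ∑ q ∈ FR, mult ξ q := by
      apply IH FR.card (hlt FR subFR) FR s' a' b b' rfl (by linarith) hb hab
      · intro q
        constructor
        · intro hq
          simp only [hFRd, hFr, Finset.mem_filter] at hq
          obtain ⟨⟨hqT', h1⟩, h2⟩ := hq
          obtain ⟨g1, g2, g3, g4, g5⟩ := (hchar q).mp (hmemT q hqT')
          exact ⟨le_of_lt (not_le.mp h2), g2, g3, g4, g5⟩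
        · rintro ⟨g1, g2, g3, g4, g5⟩
          have hqT : q ∈ T := (hchar q).mpr ⟨by linarith, g2, g3, g4, g5⟩
          have hqne : q ≠ c := by
            intro h
            rw [h] at g1
            have : c.1 < s' := by rw [hs']; linarith
            linarith
          have hqT' : q ∈ T' := Finset.mem_erase.mpr ⟨hqne, hqT⟩
          have hlt1 : s' < q.1 := lt_of_le_of_ne g1 (Ne.symm (hne1s' q hqT'))
          simp only [hFRd, hFr, Finset.mem_filter]
          refine ⟨⟨hqT', by rw [not_le]; rw [hs] at *; rw [hs'] at hlt1; linarith⟩,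
            by rw [not_le]; exact hlt1⟩
      · intro q hq
        simp only [hFRd, hFr, Finset.mem_filter] at hq
        obtain ⟨⟨hqT', h1⟩, h2⟩ := hq
        obtain ⟨g1, g2, g3, g4⟩ := hT q (hmemT q hqT')
        exact ⟨not_le.mp h2, g2, g3, g4⟩
    -- region B
    have hB : NN ξ s s' b t = ∑ q ∈ FB, mult ξ q := by
      apply IH FB.card (hlt FB subFB) FB s s' b t rfl (by linarith) (by linarith) (by linarith)
      · intro q
        constructor
        · intro hq
          simp only [hFB, hFM, hFr, Finset.mem_filter] at hq
          obtain ⟨⟨⟨hqT', h1⟩, h2⟩, h3⟩ := hq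
          obtain ⟨g1, g2, g3, g4, g5⟩ := (hchar q).mp (hmemT q hqT')
          exact ⟨le_of_lt (not_le.mp h1), h2, g3, h3, g5⟩
        · rintro ⟨g1, g2, g3, g4, g5⟩
          have hqT : q ∈ T := (hchar q).mpr ⟨by linarith, by linarith, g3, by linarith, g5⟩
          have hqne : q ≠ c := by
            intro h
            rw [h] at g4
            have : t < c.2 := by rw [ht]; linarith
            linarith
          have hqT' : q ∈ T' := Finset.mem_erase.mpr ⟨hqne, hqT⟩
          have hlt1 : s < q.1 := lt_of_le_of_ne g1 (Ne.symm (hne1s q hqT'))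
          simp only [hFB, hFM, hFr, Finset.mem_filter]
          exact ⟨⟨⟨hqT', not_le.mpr hlt1⟩, g2⟩, g4⟩
      · intro q hq
        simp only [hFB, hFM, hFr, Finset.mem_filter] at hq
        obtain ⟨⟨⟨hqT', h1⟩, h2⟩, h3⟩ := hq
        obtain ⟨g1, g2, g3, g4⟩ := hT q (hmemT q hqT')
        exact ⟨not_le.mp h1, lt_of_le_of_ne h2 (hne1s' q hqT'), g3,
          lt_of_le_of_ne h3 (hne2t q hqT')⟩
    -- region T
    have hTT : NN ξ s s' t' b' = ∑ q ∈ FT, mult ξ q := by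
      apply IH FT.card (hlt FT subFT) FT s s' t' b' rfl (by linarith) (by linarith) (by linarith)
      · intro q
        constructor
        · intro hq
          simp only [hFT, hFM2, hFM, hFr, Finset.mem_filter] at hq
          obtain ⟨⟨⟨⟨hqT', h1⟩, h2⟩, h3⟩, h4⟩ := hq
          obtain ⟨g1, g2, g3, g4, g5⟩ := (hchar q).mp (hmemT q hqT')
          exact ⟨le_of_lt (not_le.mp h1), h2, le_of_lt (not_le.mp h4), g4, g5⟩
        · rintro ⟨g1, g2, g3, g4, g5⟩
          have hqT : q ∈ T := (hchar q).mpr ⟨by linarith, by linarith, by linarith, g4, g5⟩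
          have hqne : q ≠ c := by
            intro h
            rw [h] at g3
            have : c.2 < t' := by rw [ht']; linarith
            linarith
          have hqT' : q ∈ T' := Finset.mem_erase.mpr ⟨hqne, hqT⟩
          have hlt1 : s < q.1 := lt_of_le_of_ne g1 (Ne.symm (hne1s q hqT'))
          have hlt2 : t' < q.2 := lt_of_le_of_ne g3 (Ne.symm (hne2t' q hqT'))
          have hlt3 : t < q.2 := by rw [ht]; rw [ht'] at hlt2; linarith
          simp only [hFT, hFM2, hFM, hFr, Finset.mem_filter]
          exact ⟨⟨⟨⟨hqT', not_le.mpr hlt1⟩, g2⟩, not_le.mpr hlt3⟩, not_le.mpr hlt2⟩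
      · intro q hq
        simp only [hFT, hFM2, hFM, hFr, Finset.mem_filter] at hq
        obtain ⟨⟨⟨⟨hqT', h1⟩, h2⟩, h3⟩, h4⟩ := hq
        obtain ⟨g1, g2, g3, g4⟩ := hT q (hmemT q hqT')
        exact ⟨not_le.mp h1, lt_of_le_of_ne h2 (hne1s' q hqT'), not_le.mp h4, g4⟩
    have hd1 : NN ξ a a' b b' = NN ξ a s b b' + NN ξ s a' b b' := NN_split_x ξ a s a' b b'
    have hd2 : NN ξ s a' b b' = NN ξ s s' b b' + NN ξ s' a' b b' := NN_split_x ξ s s' a' b b'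
    have hd3 : NN ξ s s' b b' = NN ξ s s' b t + NN ξ s s' t b' := NN_split_y ξ s s' b t b'
    have hd4 : NN ξ s s' t b' = NN ξ s s' t t' + NN ξ s s' t' b' := NN_split_y ξ s s' t t' b'
    linarith [hctr]

end LCM
theorem local_constancy_of_multiplicity
    {M : Type*} [TopologicalSpace M] [CompactSpace M] [ConnectedSpace M] [LocallyConnectedSpace M] [T2Space M] {φ : M → ℝ} (hφ : Continuous φ)
    (xb yb : ℝ) (hp : xb < yb) :
    ∃ ηb > 0, ∀ η : ℝ, 0 ≤ η → η ≤ ηb → ∀ ψ : M → ℝ, Continuous ψ →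
      (∀ Q : M, |φ Q - ψ Q| ≤ η) →
      {q : ℝ × ℝ | q.1 < q.2 ∧ |q.1 - xb| ≤ η ∧ |q.2 - yb| ≤ η ∧ mult ψ q ≠ 0}.Finite ∧
      (∑ᶠ q ∈ {q : ℝ × ℝ | q.1 < q.2 ∧ |q.1 - xb| ≤ η ∧ |q.2 - yb| ≤ η}, mult ψ q) =
        mult φ (xb, yb) := by
  classical
  obtain ⟨hm0, ε₀, hε₀, hgap, hsq⟩ := LCM.mult_spec hφ hp
  set m := mult φ (xb, yb) with hmdef
  have hε₀yx : 2 * ε₀ < yb - xb := by linarith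
  refine ⟨min (ε₀ / 4) ((yb - xb) / 8), lt_min (by linarith) (by linarith), ?_⟩
  intro η hη0 hηb ψ hψ hd
  have hη1 : η ≤ ε₀ / 4 := le_trans hηb (min_le_left _ _)
  have hη2 : η ≤ (yb - xb) / 8 := le_trans hηb (min_le_right _ _)
  have hd' : ∀ Q, |ψ Q - φ Q| ≤ η := fun Q => by rw [abs_sub_comm]; exact hd Q
  -- Step A : NN of ψ on any slightly enlarged square equals m
  have key : ∀ δ : ℝ, 0 < δ → δ ≤ ε₀ / 2 →
      LCM.NN ψ (xb - η - δ) (xb + η + δ) (yb - η - δ) (yb + η + δ) = m := by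
    intro δ hδ0 hδ
    have upper : LCM.NN ψ (xb - η - δ) (xb + η + δ) (yb - η - δ) (yb + η + δ) ≤
        LCM.NN φ (xb - (2 * η + δ)) (xb + (2 * η + δ)) (yb - (2 * η + δ)) (yb + (2 * η + δ)) := by
      apply LCM.NN_le_NN hφ hψ hd (by linarith) (by linarith) (by linarith) (by linarith)
        (by linarith) (by linarith) (by linarith) (by linarith)
    have lower : LCM.NN φ (xb - δ) (xb + δ) (yb - δ) (yb + δ) ≤
        LCM.NN ψ (xb - η - δ) (xb + η + δ) (yb - η - δ) (yb + η + δ) := by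
      apply LCM.NN_le_NN hψ hφ hd' (by linarith) (by linarith) (by linarith) (by linarith)
        (by linarith) (by linarith) (by linarith) (by linarith)
    rw [hsq (2 * η + δ) (by linarith) (by linarith)] at upper
    rw [hsq δ hδ0 (by linarith)] at lower
    omega
  -- Step B : finiteness of nonzero-multiplicity points in an enlarged open square
  set Splus : Set (ℝ × ℝ) := {q : ℝ × ℝ |
    (xb - η - ε₀ / 2 < q.1 ∧ q.1 < xb + η + ε₀ / 2 ∧
     yb - η - ε₀ / 2 < q.2 ∧ q.2 < yb + η + ε₀ / 2) ∧ mult ψ q ≠ 0} with hSplusdef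
  have hposS : ∀ q ∈ Splus, 0 < mult ψ q := by
    rintro q ⟨⟨g1, g2, g3, g4⟩, g5⟩
    have hq12 : q.1 < q.2 := by linarith
    have := LCM.mult_nonneg hψ hq12
    omega
  have hSplusfin : Splus.Finite := by
    by_contra hinf
    rw [← Set.not_infinite, not_not] at hinf
    obtain ⟨F, hFsub, hFcard⟩ := hinf.exists_subset_card_eq (m.toNat + 1)
    have hle := LCM.sum_mult_le hψ F.card F (xb - η - ε₀ / 2) (xb + η + ε₀ / 2)
      (yb - η - ε₀ / 2) (yb + η + ε₀ / 2) rfl (by linarith) (by linarith) (by linarith) ?_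
    · rw [key (ε₀ / 2) (by linarith) (le_refl _)] at hle
      have hcard : (F.card : ℤ) ≤ ∑ q ∈ F, mult ψ q := by
        calc (F.card : ℤ) = ∑ _q ∈ F, (1 : ℤ) := by simp
          _ ≤ ∑ q ∈ F, mult ψ q := Finset.sum_le_sum fun q hq => hposS q (hFsub hq)
      rw [hFcard] at hcard
      have : (m.toNat : ℤ) = m := Int.toNat_of_nonneg hm0
      push_cast at hcard
      omega
    · intro q hq
      obtain ⟨⟨g1, g2, g3, g4⟩, g5⟩ := hFsub hq
      exact ⟨g1, g2, g3, g4, hposS q (hFsub hq)⟩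
  set S : Set (ℝ × ℝ) := {q : ℝ × ℝ | q.1 < q.2 ∧ |q.1 - xb| ≤ η ∧ |q.2 - yb| ≤ η ∧
    mult ψ q ≠ 0} with hSdef
  have hSsub : S ⊆ Splus := by
    rintro q ⟨g0, g1, g2, g3⟩
    rw [abs_le] at g1 g2
    exact ⟨⟨by linarith [g1.1], by linarith [g1.2], by linarith [g2.1], by linarith [g2.2]⟩, g3⟩
  have hSfin : S.Finite := hSplusfin.subset hSsub
  refine ⟨hSfin, ?_⟩
  -- Step C : choose δ so that the closed (η+δ)-square captures exactly S
  set B : Finset (ℝ × ℝ) := hSplusfin.toFinset.filter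
    (fun q => ¬(|q.1 - xb| ≤ η ∧ |q.2 - yb| ≤ η)) with hBdef
  have hex : ∃ δ : ℝ, 0 < δ ∧ δ ≤ ε₀ / 4 ∧
      ∀ q ∈ B, η + δ < max |q.1 - xb| |q.2 - yb| := by
    by_cases hB : B.Nonempty
    · have hdpos : 0 < B.inf' hB (fun q => max |q.1 - xb| |q.2 - yb| - η) := by
        rw [Finset.lt_inf'_iff]
        intro q hq
        rw [hBdef, Finset.mem_filter] at hq
        rcases not_and_or.mp hq.2 with h | h
        · have := not_le.mp h
          have h2 : η < max |q.1 - xb| |q.2 - yb| := lt_max_of_lt_left this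
          linarith
        · have := not_le.mp h
          have h2 : η < max |q.1 - xb| |q.2 - yb| := lt_max_of_lt_right this
          linarith
      set d := B.inf' hB (fun q => max |q.1 - xb| |q.2 - yb| - η) with hddef
      refine ⟨min (ε₀ / 4) (d / 2), lt_min (by linarith) (by linarith), min_le_left _ _, ?_⟩
      intro q hq
      have h1 : min (ε₀ / 4) (d / 2) ≤ d / 2 := min_le_right _ _
      have h2 : d ≤ max |q.1 - xb| |q.2 - yb| - η := hddef ▸ Finset.inf'_le _ hq
      linarith
    · exact ⟨ε₀ / 4, by linarith, le_refl _, fun q hq => absurd ⟨q, hq⟩ hB⟩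
  obtain ⟨δ, hδ0, hδε, hδB⟩ := hex
  set T : Finset (ℝ × ℝ) := hSfin.toFinset with hTdef
  have hmemS : ∀ q : ℝ × ℝ, q ∈ T ↔ q ∈ S := fun q => hSfin.mem_toFinset
  have hchar : ∀ q : ℝ × ℝ, q ∈ T ↔ (xb - η - δ ≤ q.1 ∧ q.1 ≤ xb + η + δ ∧
      yb - η - δ ≤ q.2 ∧ q.2 ≤ yb + η + δ ∧ mult ψ q ≠ 0) := by
    intro q
    rw [hmemS]
    constructor
    · rintro ⟨g0, g1, g2, g3⟩
      rw [abs_le] at g1 g2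
      exact ⟨by linarith [g1.1], by linarith [g1.2], by linarith [g2.1], by linarith [g2.2], g3⟩
    · rintro ⟨g1, g2, g3, g4, g5⟩
      have hqplus : q ∈ Splus := by
        refine ⟨⟨by linarith, by linarith, by linarith, by linarith⟩, g5⟩
      have hqsq : |q.1 - xb| ≤ η ∧ |q.2 - yb| ≤ η := by
        by_contra hcon
        have hqB : q ∈ B := by
          rw [hBdef, Finset.mem_filter]
          exact ⟨hSplusfin.mem_toFinset.mpr hqplus, hcon⟩
        have := hδB q hqB
        have h1 : |q.1 - xb| ≤ η + δ := abs_le.mpr ⟨by linarith, by linarith⟩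
        have h2 : |q.2 - yb| ≤ η + δ := abs_le.mpr ⟨by linarith, by linarith⟩
        have := max_le h1 h2
        linarith [hδB q hqB]
      exact ⟨by linarith, hqsq.1, hqsq.2, g5⟩
  have hopen : ∀ q ∈ T, xb - η - δ < q.1 ∧ q.1 < xb + η + δ ∧
      yb - η - δ < q.2 ∧ q.2 < yb + η + δ := by
    intro q hq
    obtain ⟨g0, g1, g2, g3⟩ := (hmemS q).mp hq
    rw [abs_le] at g1 g2
    exact ⟨by linarith [g1.1], by linarith [g1.2], by linarith [g2.1], by linarith [g2.2]⟩
  have hcnt := LCM.sum_mult_eq hψ T.card T (xb - η - δ) (xb + η + δ) (yb - η - δ)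
    (yb + η + δ) rfl (by linarith) (by linarith) (by linarith) hchar hopen
  rw [key δ hδ0 (by linarith)] at hcnt
  -- Step D : identify the finsum with the finite sum
  have hfin : (∑ᶠ q ∈ {q : ℝ × ℝ | q.1 < q.2 ∧ |q.1 - xb| ≤ η ∧ |q.2 - yb| ≤ η}, mult ψ q)
      = ∑ q ∈ T, mult ψ q := by
    apply finsum_mem_eq_sum_of_inter_support_eq
    ext q
    simp only [Set.mem_inter_iff, Set.mem_setOf_eq, Function.mem_support, Finset.coe_sort_coe,
      Finset.mem_coe]
    constructor
    · rintro ⟨⟨g0, g1, g2⟩, g3⟩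
      exact ⟨(hmemS q).mpr ⟨g0, g1, g2, g3⟩, g3⟩
    · rintro ⟨hq, g3⟩
      obtain ⟨g0, g1, g2, -⟩ := (hmemS q).mp hq
      exact ⟨⟨g0, g1, g2⟩, g3⟩
  rw [hfin, ← hcnt]
end
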